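/- arXiv:0903.3694 — 4 statements merged into one kernel-verified Lean document; each statement's English description precedes it below -/
import Mathlib

section
/- Let V ⊆ ℂ^n be a k-dimensional linear subspace and set r_{ij} = r_{ij}(V) for i, j ∈ ℤ. Then this array is a cyclic rank matrix of type (k,n); that is: (C1') r_{ij} = j−i+1 for all j < i; (C2') r_{ij} = k for all j ≥ i+n−1; (C3) r_{ij} − r_{(i+1)j} ∈ {0,1} and r_{ij} − r_{i(j−1)} ∈ {0,1} for all i, j ∈ ℤ; (C4) if r_{(i+1)(j−1)} = r_{(i+1)j} = r_{i(j−1)} then r_{ij} = r_{(i+1)(j−1)}; (C5) r_{(i+n)(j+n)} = r_{ij} for all i, j ∈ ℤ. -/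
open scoped Classical in
/-- The coordinate projection Proj_S : ℂ^n → ℂ^n, sending e_m to e_m for m ∈ S
and to 0 otherwise. -/
noncomputable def coordProj (n : ℕ) (S : Set (Fin n)) : (Fin n → ℂ) →ₗ[ℂ] (Fin n → ℂ) where
  toFun v := fun m => if m ∈ S then v m else 0
  map_add' u v := by funext m; by_cases h : m ∈ S <;> simp [h]
  map_smul' c v := by funext m; by_cases h : m ∈ S <;> simp [h]

/-- The cyclic interval C(i,j) ⊆ [n] (0-based: m ∈ Fin n corresponds to m+1 ∈ [n]):
those m with m ≡ t (mod n) for some i ≤ t ≤ j. -/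
def cycSet (n : ℕ) (i j : ℤ) : Set (Fin n) :=
  {m | ∃ t : ℤ, i ≤ t ∧ t ≤ j ∧ (n : ℤ) ∣ ((m : ℤ) + 1 - t)}

/-- The cyclic rank matrix entry r_{ij}(V): for i ≤ j the rank of the projection of V
to the cyclically consecutive coordinates C(i,j); for i > j it is j − i + 1. -/
noncomputable def cycRank (n : ℕ) (V : Submodule ℂ (Fin n → ℂ)) (i j : ℤ) : ℤ :=
  if i ≤ j then (Module.finrank ℂ (V.map (coordProj n (cycSet n i j))) : ℤ)
  else j - i + 1

open Module
open scoped Classical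

lemma coordProj_apply (n : ℕ) (S : Set (Fin n)) (v : Fin n → ℂ) (m : Fin n) :
    coordProj n S v m = if m ∈ S then v m else 0 := rfl

lemma coordProj_comp {n : ℕ} {T S : Set (Fin n)} (h : T ⊆ S) :
    (coordProj n T).comp (coordProj n S) = coordProj n T := by
  apply LinearMap.ext; intro v; funext m
  by_cases hm : m ∈ T
  · simp [coordProj_apply, hm, h hm]
  · simp [coordProj_apply, hm]

lemma coordProj_empty (n : ℕ) : coordProj n (∅ : Set (Fin n)) = 0 := by
  apply LinearMap.ext; intro v; funext m; simp [coordProj_apply]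

lemma coordProj_univ (n : ℕ) : coordProj n (Set.univ : Set (Fin n)) = LinearMap.id := by
  apply LinearMap.ext; intro v; funext m; simp [coordProj_apply]

lemma finrank_map_mono {n : ℕ} (V : Submodule ℂ (Fin n → ℂ)) {T S : Set (Fin n)} (h : T ⊆ S) :
    finrank ℂ (V.map (coordProj n T)) ≤ finrank ℂ (V.map (coordProj n S)) := by
  rw [← coordProj_comp h, Submodule.map_comp]
  exact Submodule.finrank_map_le _ _

lemma rank_map_eq_of_inj {n : ℕ} (W : Submodule ℂ (Fin n → ℂ))
    (f : (Fin n → ℂ) →ₗ[ℂ] (Fin n → ℂ)) (h : ∀ w ∈ W, f w = 0 → w = 0) :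
    finrank ℂ (W.map f) = finrank ℂ W := by
  have hr := LinearMap.finrank_range_add_finrank_ker (f.comp W.subtype)
  have hker : LinearMap.ker (f.comp W.subtype) = ⊥ := by
    rw [LinearMap.ker_eq_bot']
    intro w hw
    exact Subtype.ext (h w w.2 hw)
  have hrange : LinearMap.range (f.comp W.subtype) = W.map f := by
    rw [LinearMap.range_comp, Submodule.range_subtype]
  rw [hrange, hker] at hr
  simpa using hr

lemma inj_of_rank_map_eq {n : ℕ} (W : Submodule ℂ (Fin n → ℂ))
    (f : (Fin n → ℂ) →ₗ[ℂ] (Fin n → ℂ)) (h : finrank ℂ (W.map f) = finrank ℂ W) :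
    ∀ w ∈ W, f w = 0 → w = 0 := by
  have hr := LinearMap.finrank_range_add_finrank_ker (f.comp W.subtype)
  have hrange : LinearMap.range (f.comp W.subtype) = W.map f := by
    rw [LinearMap.range_comp, Submodule.range_subtype]
  rw [hrange, h] at hr
  have hker : LinearMap.ker (f.comp W.subtype) = ⊥ := by
    apply Submodule.finrank_eq_zero.mp
    omega
  intro w hw h0
  have hm : (⟨w, hw⟩ : W) ∈ LinearMap.ker (f.comp W.subtype) := by
    simpa [LinearMap.mem_ker] using h0
  rw [hker, Submodule.mem_bot] at hm
  simpa using congrArg Subtype.val hm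

lemma coordProj_union_apply {n : ℕ} (A B : Set (Fin n)) (v : Fin n → ℂ) :
    coordProj n (A ∪ B) v =
      coordProj n A v + coordProj n B v - coordProj n (A ∩ B) v := by
  funext m
  by_cases hA : m ∈ A <;> by_cases hB : m ∈ B <;>
    simp [coordProj_apply, hA, hB, Set.mem_union, Set.mem_inter_iff]

lemma coordProj_diff_apply {n : ℕ} {T S : Set (Fin n)} (h : T ⊆ S) (v : Fin n → ℂ) :
    coordProj n S v = coordProj n T v + coordProj n (S \ T) v := by
  funext m
  by_cases hT : m ∈ T
  · simp [coordProj_apply, hT, h hT, Set.mem_diff]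
  · by_cases hS : m ∈ S <;> simp [coordProj_apply, hT, hS, Set.mem_diff]

lemma rank_map_subsingleton {n : ℕ} (V : Submodule ℂ (Fin n → ℂ)) {E : Set (Fin n)}
    (hE : E.Subsingleton) : finrank ℂ (V.map (coordProj n E)) ≤ 1 := by
  rcases hE.eq_empty_or_singleton with h | ⟨a, h⟩
  · rw [h, coordProj_empty, Submodule.map_zero]
    simp
  · have hne : (Pi.single a (1:ℂ) : Fin n → ℂ) ≠ 0 := by
      intro h0
      have := congrFun h0 a
      simp at this
    have hle : V.map (coordProj n E) ≤ ℂ ∙ (Pi.single a 1 : Fin n → ℂ) := by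
      rintro x ⟨v, -, rfl⟩
      rw [Submodule.mem_span_singleton]
      refine ⟨v a, ?_⟩
      funext m
      by_cases hm : m = a
      · subst hm; simp [coordProj_apply, h]
      · simp [coordProj_apply, h, hm, Pi.single_apply]
    calc finrank ℂ (V.map (coordProj n E))
        ≤ finrank ℂ (ℂ ∙ (Pi.single a 1 : Fin n → ℂ)) := Submodule.finrank_mono hle
      _ = 1 := finrank_span_singleton hne

lemma rank_map_le_add {n : ℕ} (V : Submodule ℂ (Fin n → ℂ)) {T S : Set (Fin n)} (h : T ⊆ S) :
    finrank ℂ (V.map (coordProj n S)) ≤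
      finrank ℂ (V.map (coordProj n T)) + finrank ℂ (V.map (coordProj n (S \ T))) := by
  have hle : V.map (coordProj n S) ≤ V.map (coordProj n T) ⊔ V.map (coordProj n (S \ T)) := by
    rintro x ⟨v, hv, rfl⟩
    rw [coordProj_diff_apply h v]
    exact Submodule.add_mem_sup ⟨v, hv, rfl⟩ ⟨v, hv, rfl⟩
  exact le_trans (Submodule.finrank_mono hle)
    (Submodule.finrank_add_le_finrank_add_finrank _ _)

lemma class_subsingleton (n : ℕ) (c : ℤ) :
    {m : Fin n | (n:ℤ) ∣ ((m:ℤ) + 1 - c)}.Subsingleton := by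
  intro m hm m' hm'
  have hd : (n:ℤ) ∣ ((m:ℤ) - (m':ℤ)) := by
    have h := dvd_sub (Set.mem_setOf_eq ▸ hm) (Set.mem_setOf_eq ▸ hm')
    have e : ((m:ℤ) + 1 - c) - ((m':ℤ) + 1 - c) = (m:ℤ) - m' := by ring
    rwa [e] at h
  have hlt : |((m:ℤ) - (m':ℤ))| < n := by
    have h1 := m.isLt
    have h2 := m'.isLt
    rw [abs_lt]
    omega
  have h0 := Int.eq_zero_of_abs_lt_dvd hd hlt
  have : (m:ℤ) = m' := by omega
  exact Fin.ext (by exact_mod_cast this)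

lemma cycSet_mono {n : ℕ} {i i' j j' : ℤ} (hi : i ≤ i') (hj : j' ≤ j) :
    cycSet n i' j' ⊆ cycSet n i j := by
  rintro m ⟨t, h1, h2, h3⟩
  exact ⟨t, le_trans hi h1, le_trans h2 hj, h3⟩

lemma cycSet_eq_univ {n : ℕ} (hn : 1 ≤ n) {i j : ℤ} (h : i + n - 1 ≤ j) :
    cycSet n i j = Set.univ := by
  ext m
  simp only [Set.mem_univ, iff_true]
  have hnpos : (0:ℤ) < n := by exact_mod_cast hn
  have h1 := Int.emod_nonneg ((m:ℤ) + 1 - i) (by omega : (n:ℤ) ≠ 0)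
  have h2 := Int.emod_lt_of_pos ((m:ℤ) + 1 - i) hnpos
  refine ⟨i + ((m:ℤ) + 1 - i) % n, by omega, by omega, ((m:ℤ) + 1 - i) / n, ?_⟩
  have h3 := Int.emod_add_mul_ediv ((m:ℤ) + 1 - i) (n:ℤ)
  linarith

lemma cycSet_empty {n : ℕ} {i j : ℤ} (h : j < i) : cycSet n i j = ∅ := by
  ext m
  simp only [cycSet, Set.mem_setOf_eq, Set.mem_empty_iff_false, iff_false]
  rintro ⟨t, h1, h2, -⟩
  omega

lemma cycSet_shift (n : ℕ) (i j : ℤ) : cycSet n (i + n) (j + n) = cycSet n i j := by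
  ext m
  constructor
  · rintro ⟨t, h1, h2, h3⟩
    refine ⟨t - n, by omega, by omega, ?_⟩
    have e : (m:ℤ) + 1 - (t - n) = ((m:ℤ) + 1 - t) + n := by ring
    rw [e]; exact dvd_add h3 dvd_rfl
  · rintro ⟨t, h1, h2, h3⟩
    refine ⟨t + n, by omega, by omega, ?_⟩
    have e : (m:ℤ) + 1 - (t + n) = ((m:ℤ) + 1 - t) - n := by ring
    rw [e]; exact dvd_sub h3 dvd_rfl

lemma cycSet_union {n : ℕ} {i j : ℤ} (h : i < j) :
    cycSet n i j = cycSet n (i + 1) j ∪ cycSet n i (j - 1) := by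
  ext m
  constructor
  · rintro ⟨t, h1, h2, h3⟩
    by_cases ht : i + 1 ≤ t
    · exact Or.inl ⟨t, ht, h2, h3⟩
    · exact Or.inr ⟨t, h1, by omega, h3⟩
  · rintro (hm | hm)
    · exact cycSet_mono (by omega) le_rfl hm
    · exact cycSet_mono le_rfl (by omega) hm

lemma cycSet_inter {n : ℕ} (hn : 1 ≤ n) {i j : ℤ} (h : i < j) (h2 : j < i + n) :
    cycSet n (i + 1) j ∩ cycSet n i (j - 1) = cycSet n (i + 1) (j - 1) := by
  ext m
  constructor
  · rintro ⟨⟨t1, a1, b1, d1⟩, ⟨t2, a2, b2, d2⟩⟩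
    have hd : (n:ℤ) ∣ t1 - t2 := by
      have hh := dvd_sub d2 d1
      have e : ((m:ℤ) + 1 - t2) - ((m:ℤ) + 1 - t1) = t1 - t2 := by ring
      rwa [e] at hh
    have h0 := Int.eq_zero_of_abs_lt_dvd hd (by rw [abs_lt]; omega)
    exact ⟨t1, a1, by omega, d1⟩
  · rintro ⟨t, h1, h2, h3⟩
    exact ⟨⟨t, h1, by omega, h3⟩, ⟨t, by omega, h2, h3⟩⟩

lemma cycRank_eq {n : ℕ} (V : Submodule ℂ (Fin n → ℂ)) {a b : ℤ} (h : a ≤ b + 1) :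
    cycRank n V a b = (finrank ℂ (V.map (coordProj n (cycSet n a b))) : ℤ) := by
  by_cases hab : a ≤ b
  · rw [cycRank, if_pos hab]
  · rw [cycRank, if_neg hab, cycSet_empty (by omega), coordProj_empty, Submodule.map_zero]
    simp
    omega

lemma cycRank_full {n k : ℕ} (hn : 1 ≤ n) (V : Submodule ℂ (Fin n → ℂ))
    (hV : finrank ℂ V = k) {i j : ℤ} (h : i + n - 1 ≤ j) : cycRank n V i j = k := by
  have hij : i ≤ j := by omega
  rw [cycRank, if_pos hij, cycSet_eq_univ hn h, coordProj_univ, Submodule.map_id, hV]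

lemma cycSet_diff_left {n : ℕ} {i j : ℤ} :
    cycSet n i j \ cycSet n (i + 1) j ⊆ {m : Fin n | (n:ℤ) ∣ ((m:ℤ) + 1 - i)} := by
  rintro m ⟨⟨t, h1, h2, h3⟩, hm⟩
  by_cases ht : i + 1 ≤ t
  · exact absurd ⟨t, ht, h2, h3⟩ hm
  · have he : t = i := by omega
    exact he ▸ h3

lemma cycSet_diff_right {n : ℕ} {i j : ℤ} :
    cycSet n i j \ cycSet n i (j - 1) ⊆ {m : Fin n | (n:ℤ) ∣ ((m:ℤ) + 1 - j)} := by
  rintro m ⟨⟨t, h1, h2, h3⟩, hm⟩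
  by_cases ht : t ≤ j - 1
  · exact absurd ⟨t, h1, ht, h3⟩ hm
  · have he : t = j := by omega
    exact he ▸ h3

lemma cycSet_self_sub {n : ℕ} (i : ℤ) :
    cycSet n i i ⊆ {m : Fin n | (n:ℤ) ∣ ((m:ℤ) + 1 - i)} := by
  rintro m ⟨t, h1, h2, h3⟩
  have he : t = i := le_antisymm h2 h1
  exact he ▸ h3

theorem stmt_9 (n k : ℕ) (hn : 1 ≤ n) (hk : k ≤ n)
    (V : Submodule ℂ (Fin n → ℂ)) (hV : Module.finrank ℂ V = k) :
    -- (C1')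
    (∀ i j : ℤ, j < i → cycRank n V i j = j - i + 1) ∧
    -- (C2')
    (∀ i j : ℤ, i + n - 1 ≤ j → cycRank n V i j = k) ∧
    -- (C3)
    (∀ i j : ℤ,
      (cycRank n V i j - cycRank n V (i + 1) j = 0 ∨
        cycRank n V i j - cycRank n V (i + 1) j = 1) ∧
      (cycRank n V i j - cycRank n V i (j - 1) = 0 ∨
        cycRank n V i j - cycRank n V i (j - 1) = 1)) ∧
    -- (C4)
    (∀ i j : ℤ, cycRank n V (i + 1) (j - 1) = cycRank n V (i + 1) j →
      cycRank n V (i + 1) j = cycRank n V i (j - 1) →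
      cycRank n V i j = cycRank n V (i + 1) (j - 1)) ∧
    -- (C5)
    (∀ i j : ℤ, cycRank n V (i + n) (j + n) = cycRank n V i j) := by
  refine ⟨?_, ?_, ?_, ?_, ?_⟩
  · intro i j hji
    rw [cycRank, if_neg (by omega)]
  · intro i j h
    exact cycRank_full hn V hV h
  · intro i j
    constructor
    · by_cases hlt : i < j
      · have hTS : cycSet n (i + 1) j ⊆ cycSet n i j := cycSet_mono (by omega) le_rfl
        have hsub : (cycSet n i j \ cycSet n (i + 1) j).Subsingleton :=
          (class_subsingleton n i).anti cycSet_diff_left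
        have h1 := finrank_map_mono V hTS
        have h2 := rank_map_le_add V hTS
        have h3 := rank_map_subsingleton V hsub
        rw [cycRank_eq (a := i) (b := j) V (by omega),
            cycRank_eq (a := i + 1) (b := j) V (by omega)]
        omega
      · by_cases hij : i ≤ j
        · have hi : i = j := by omega
          subst hi
          have h1 := rank_map_subsingleton V ((class_subsingleton n i).anti (cycSet_self_sub i))
          rw [cycRank, if_pos le_rfl, cycRank, if_neg (by omega)]
          omega
        · rw [cycRank, if_neg hij, cycRank, if_neg (by omega)]
          omega
    · by_cases hlt : i < j
      · have hTS : cycSet n i (j - 1) ⊆ cycSet n i j := cycSet_mono le_rfl (by omega)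
        have hsub : (cycSet n i j \ cycSet n i (j - 1)).Subsingleton :=
          (class_subsingleton n j).anti cycSet_diff_right
        have h1 := finrank_map_mono V hTS
        have h2 := rank_map_le_add V hTS
        have h3 := rank_map_subsingleton V hsub
        rw [cycRank_eq (a := i) (b := j) V (by omega),
            cycRank_eq (a := i) (b := j - 1) V (by omega)]
        omega
      · by_cases hij : i ≤ j
        · have hi : i = j := by omega
          subst hi
          have h1 := rank_map_subsingleton V ((class_subsingleton n i).anti (cycSet_self_sub i))
          rw [cycRank, if_pos le_rfl, cycRank, if_neg (by omega)]
          omega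
        · rw [cycRank, if_neg hij, cycRank, if_neg (by omega)]
          omega
  · intro i j h1 h2
    by_cases hij : i < j
    · by_cases hn' : j < i + n
      · rw [cycRank_eq (a := i + 1) (b := j - 1) V (by omega),
            cycRank_eq (a := i + 1) (b := j) V (by omega)] at h1
        rw [cycRank_eq (a := i + 1) (b := j) V (by omega),
            cycRank_eq (a := i) (b := j - 1) V (by omega)] at h2
        rw [cycRank_eq (a := i) (b := j) V (by omega),
            cycRank_eq (a := i + 1) (b := j - 1) V (by omega)]
        have hDA : finrank ℂ (V.map (coordProj n (cycSet n (i + 1) (j - 1)))) =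
            finrank ℂ (V.map (coordProj n (cycSet n (i + 1) j))) := by exact_mod_cast h1
        have hDB : finrank ℂ (V.map (coordProj n (cycSet n (i + 1) (j - 1)))) =
            finrank ℂ (V.map (coordProj n (cycSet n i (j - 1)))) := by
          exact_mod_cast h1.trans h2
        have hDA' : cycSet n (i + 1) (j - 1) ⊆ cycSet n (i + 1) j :=
          cycSet_mono le_rfl (by omega)
        have hDB' : cycSet n (i + 1) (j - 1) ⊆ cycSet n i (j - 1) :=
          cycSet_mono (by omega) le_rfl
        have hDS : cycSet n (i + 1) (j - 1) ⊆ cycSet n i j :=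
          cycSet_mono (by omega) (by omega)
        have hU : cycSet n i j = cycSet n (i + 1) j ∪ cycSet n i (j - 1) := cycSet_union hij
        have hI : cycSet n (i + 1) j ∩ cycSet n i (j - 1) = cycSet n (i + 1) (j - 1) :=
          cycSet_inter hn hij hn'
        have injA := inj_of_rank_map_eq (V.map (coordProj n (cycSet n (i + 1) j)))
          (coordProj n (cycSet n (i + 1) (j - 1))) (by
            rw [← Submodule.map_comp, coordProj_comp hDA']
            exact hDA)
        have injB := inj_of_rank_map_eq (V.map (coordProj n (cycSet n i (j - 1))))
          (coordProj n (cycSet n (i + 1) (j - 1))) (by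
            rw [← Submodule.map_comp, coordProj_comp hDB']
            exact hDB)
        have key : ∀ w ∈ V.map (coordProj n (cycSet n i j)),
            coordProj n (cycSet n (i + 1) (j - 1)) w = 0 → w = 0 := by
          rintro w ⟨v, hv, rfl⟩ h0
          have hDv : coordProj n (cycSet n (i + 1) (j - 1)) v = 0 := by
            rw [← LinearMap.comp_apply, coordProj_comp hDS] at h0
            exact h0
          have hAv : coordProj n (cycSet n (i + 1) j) v = 0 := by
            refine injA _ ⟨v, hv, rfl⟩ ?_
            rw [← LinearMap.comp_apply, coordProj_comp hDA']
            exact hDv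
          have hBv : coordProj n (cycSet n i (j - 1)) v = 0 := by
            refine injB _ ⟨v, hv, rfl⟩ ?_
            rw [← LinearMap.comp_apply, coordProj_comp hDB']
            exact hDv
          rw [hU, coordProj_union_apply, hAv, hBv, hI, hDv]
          simp
        have h3 := rank_map_eq_of_inj (V.map (coordProj n (cycSet n i j)))
          (coordProj n (cycSet n (i + 1) (j - 1))) key
        rw [← Submodule.map_comp, coordProj_comp hDS] at h3
        exact_mod_cast h3.symm
      · have hS : cycRank n V i j = k := cycRank_full hn V hV (by omega)
        have hA : cycRank n V (i + 1) j = k := cycRank_full hn V hV (by omega)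
        rw [hS, h1, hA]
    · rw [cycRank, if_neg (by omega), cycRank, if_neg (by omega)] at h1
      omega
  · intro i j
    by_cases hij : i ≤ j
    · rw [cycRank, if_pos (by omega : i + (n:ℤ) ≤ j + n), cycRank, if_pos hij, cycSet_shift]
    · rw [cycRank, if_neg (by omega), cycRank, if_neg hij]
      ring
end

section
/- Let u, w ∈ S_n and suppose z ∈ S_k × S_{n−k} is such that both products uz and wz are length-additive. Then {G_k : G_• ∈ X̊_u ∩ X̊^w} = {G_k : G_• ∈ X̊_{uz} ∩ X̊^{wz}}; that is, the open Richardson varieties X̊_u^w and X̊_{uz}^{wz} have the same image under the projection sending a complete flag in ℂ^n to its k-th subspace. -/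
/-- The number of inversions of a permutation of Fin n (positions 0,…,n−1
correspond to 1,…,n). -/
def len (n : ℕ) (w : Equiv.Perm (Fin n)) : ℕ :=
  ((Finset.univ : Finset (Fin n × Fin n)).filter fun p => p.1 < p.2 ∧ w p.2 < w p.1).card

/-- The Bruhat order on S_n: generated by u < u·(a b) when the length increases. -/
def bruhatLE (n : ℕ) (u w : Equiv.Perm (Fin n)) : Prop :=
  Relation.ReflTransGen
    (fun x y => (∃ a b : Fin n, y = x * Equiv.swap a b) ∧ len n x < len n y) u w

/-- A Bruhat cover: u < w and ℓ(w) = ℓ(u) + 1. -/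
def bruhatCover (n : ℕ) (u w : Equiv.Perm (Fin n)) : Prop :=
  bruhatLE n u w ∧ u ≠ w ∧ len n w = len n u + 1

/-- σ_k(w) = w([k]) = {w(1),…,w(k)} (0-based: image of {i | i < k}). -/
def sigmaSet (n k : ℕ) (w : Equiv.Perm (Fin n)) : Finset (Fin n) :=
  (Finset.univ.filter fun i : Fin n => (i : ℕ) < k).image w

/-- A k-cover: a Bruhat cover with u([k]) ≠ w([k]). -/
def kCover (n k : ℕ) (u w : Equiv.Perm (Fin n)) : Prop :=
  bruhatCover n u w ∧ sigmaSet n k u ≠ sigmaSet n k w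

/-- The k-Bruhat order: generated by k-covers. -/
def kBruhatLE (n k : ℕ) (u w : Equiv.Perm (Fin n)) : Prop :=
  Relation.ReflTransGen (kCover n k) u w

/-- Grassmannian permutation: increasing on the first k and on the last n−k positions. -/
def IsGrassmannian (n k : ℕ) (w : Equiv.Perm (Fin n)) : Prop :=
  ∀ i j : Fin n, i < j → ((j : ℕ) < k ∨ k ≤ (i : ℕ)) → w i < w j

/-- Anti-Grassmannian permutation: decreasing on the first k and on the last n−k positions. -/
def IsAntiGrassmannian (n k : ℕ) (w : Equiv.Perm (Fin n)) : Prop :=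
  ∀ i j : Fin n, i < j → ((j : ℕ) < k ∨ k ≤ (i : ℕ)) → w j < w i

/-- Membership in the parabolic subgroup S_k × S_{n−k}: z maps [k] to [k]. -/
def InParabolic (n k : ℕ) (z : Equiv.Perm (Fin n)) : Prop :=
  ∀ i : Fin n, ((i : ℕ) < k ↔ (z i : ℕ) < k)

/-- A complete flag in ℂ^n: an increasing chain of subspaces with dim G_i = i. -/
def IsCompleteFlag (n : ℕ) (G : Fin (n + 1) → Submodule ℂ (Fin n → ℂ)) : Prop :=
  Monotone G ∧ ∀ i : Fin (n + 1), Module.finrank ℂ (G i) = (i : ℕ)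

/-- Membership in the open Schubert cell X̊_w: for all i, j ∈ [n],
dim Proj_{[j]}(G_i) = |w([i]) ∩ [j]|  (0-based indexing; the flag index i ∈ [n]
corresponds to `Fin.succ` of i−1). -/
def InOpenSchubertCell (n : ℕ) (w : Equiv.Perm (Fin n))
    (G : Fin (n + 1) → Submodule ℂ (Fin n → ℂ)) : Prop :=
  ∀ i j : Fin n,
    Module.finrank ℂ ((G i.succ).map (coordProj n {m : Fin n | (m : ℕ) ≤ (j : ℕ)})) =
      ({m : Fin n | (m : ℕ) ≤ (i : ℕ) ∧ ((w m : ℕ)) ≤ (j : ℕ)}).ncard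

/-- Membership in the open opposite Schubert cell X̊^w: for all i, j ∈ [n],
dim Proj_{[n−j+1,n]}(G_i) = |w([i]) ∩ [n−j+1,n]|. -/
def InOpenOppSchubertCell (n : ℕ) (w : Equiv.Perm (Fin n))
    (G : Fin (n + 1) → Submodule ℂ (Fin n → ℂ)) : Prop :=
  ∀ i j : Fin n,
    Module.finrank ℂ ((G i.succ).map (coordProj n {m : Fin n | n ≤ (m : ℕ) + (j : ℕ) + 1})) =
      ({m : Fin n | (m : ℕ) ≤ (i : ℕ) ∧ n ≤ ((w m : ℕ)) + (j : ℕ) + 1}).ncard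


namespace Stmt10Aux

open Module Submodule

/-! ### Linear algebra lemmas -/

variable {M : Type*} [AddCommGroup M] [Module ℂ M] [FiniteDimensional ℂ M]

lemma finrank_map_add_inf_ker (f : M →ₗ[ℂ] M) (X : Submodule ℂ M) :
    finrank ℂ (X.map f) + finrank ℂ ↥(X ⊓ LinearMap.ker f) = finrank ℂ X := by
  have h := LinearMap.finrank_range_add_finrank_ker (f.comp X.subtype)
  rw [LinearMap.range_comp, Submodule.range_subtype, LinearMap.ker_comp] at h
  have h2 : Submodule.comap X.subtype (LinearMap.ker f)
      = Submodule.comap X.subtype (X ⊓ LinearMap.ker f) := by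
    rw [Submodule.comap_inf, Submodule.comap_subtype_self, top_inf_eq]
  rw [h2, (Submodule.comapSubtypeEquivOfLe
    (inf_le_left : X ⊓ LinearMap.ker f ≤ X)).finrank_eq] at h
  exact h

lemma finrank_map_le_aux {A C : Submodule ℂ M} (h : A ≤ C) (f : M →ₗ[ℂ] M) :
    finrank ℂ (C.map f) + finrank ℂ A ≤ finrank ℂ (A.map f) + finrank ℂ C := by
  have hA := finrank_map_add_inf_ker f A
  have hC := finrank_map_add_inf_ker f C
  have hle : finrank ℂ ↥(A ⊓ LinearMap.ker f) ≤ finrank ℂ ↥(C ⊓ LinearMap.ker f) :=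
    Submodule.finrank_mono (inf_le_inf_right _ h)
  omega

lemma map_squeeze {A C : Submodule ℂ M} (h : A ≤ C) (f : M →ₗ[ℂ] M)
    (hfr : finrank ℂ (C.map f) ≤ finrank ℂ (A.map f)) : C.map f = A.map f :=
  (Submodule.eq_of_le_of_finrank_le (Submodule.map_mono h) hfr).symm

lemma ker_sub (f : M →ₗ[ℂ] M) {A C : Submodule ℂ M} (hAC : A ≤ C)
    (hone : finrank ℂ (C.map f) = finrank ℂ (A.map f) + 1) :
    A ≤ C ⊓ Submodule.comap f (A.map f) ∧
      (C ⊓ Submodule.comap f (A.map f)).map f = A.map f ∧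
      finrank ℂ ↥(C ⊓ Submodule.comap f (A.map f)) + 1 = finrank ℂ C := by
  set K := C ⊓ Submodule.comap f (A.map f) with hK
  have hAK : A ≤ K := le_inf hAC (Submodule.le_comap_map f A)
  have hKmap : K.map f = A.map f := by
    apply le_antisymm
    · rw [Submodule.map_le_iff_le_comap]; exact inf_le_right
    · exact Submodule.map_mono hAK
  refine ⟨hAK, hKmap, ?_⟩
  have hker : K ⊓ LinearMap.ker f = C ⊓ LinearMap.ker f := by
    apply le_antisymm (inf_le_inf_right _ inf_le_left)
    rintro x ⟨hxC, hxk⟩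
    refine ⟨⟨hxC, ?_⟩, hxk⟩
    have hfx : f x = 0 := LinearMap.mem_ker.mp hxk
    show f x ∈ A.map f
    rw [hfx]; exact (A.map f).zero_mem
  have h1 := finrank_map_add_inf_ker f K
  have h2 := finrank_map_add_inf_ker f C
  rw [hker] at h1
  rw [hKmap] at h1
  omega

def chi (s j : ℕ) : ℕ := if s ≤ j then 1 else 0

lemma core (P Q : ℕ → (M →ₗ[ℂ] M))
    (hP : ∀ {j j' : ℕ}, j ≤ j' → ∀ V : Submodule ℂ M, V.map (P j) = (V.map (P j')).map (P j))
    (hQ : ∀ {j j' : ℕ}, j ≤ j' → ∀ V : Submodule ℂ M, V.map (Q j) = (V.map (Q j')).map (Q j))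
    {A B C : Submodule ℂ M} (hAB : A ≤ B) (hBC : B ≤ C)
    (hfB : finrank ℂ B = finrank ℂ A + 1) (hfC : finrank ℂ C = finrank ℂ A + 2)
    {sP tP sQ tQ : ℕ} (hPst : sP < tP) (hQst : sQ < tQ)
    (hCP : ∀ j, finrank ℂ (C.map (P j)) = finrank ℂ (A.map (P j)) + chi sP j + chi tP j)
    (hCQ : ∀ j, finrank ℂ (C.map (Q j)) = finrank ℂ (A.map (Q j)) + chi sQ j + chi tQ j)
    (hBP : ∀ j, finrank ℂ (B.map (P j)) = finrank ℂ (A.map (P j)) + chi sP j)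
    (hBQ : ∀ j, finrank ℂ (B.map (Q j)) = finrank ℂ (A.map (Q j)) + chi tQ j) :
    ∃ V : Submodule ℂ M, A ≤ V ∧ V ≤ C ∧ finrank ℂ V = finrank ℂ A + 1 ∧
      (∀ j, finrank ℂ (V.map (P j)) = finrank ℂ (A.map (P j)) + chi tP j) ∧
      (∀ j, finrank ℂ (V.map (Q j)) = finrank ℂ (A.map (Q j)) + chi sQ j) := by
  have hAC : A ≤ C := le_trans hAB hBC
  set j₁ := tP - 1 with hj₁
  have hCPj₁ : finrank ℂ (C.map (P j₁)) = finrank ℂ (A.map (P j₁)) + 1 := by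
    have := hCP j₁; unfold chi at this
    rw [if_pos (by omega), if_neg (by omega)] at this; omega
  obtain ⟨hAV, hVmap, hVfr⟩ := ker_sub (P j₁) hAC hCPj₁
  set V := C ⊓ Submodule.comap (P j₁) (A.map (P j₁)) with hVdef
  have hVC : V ≤ C := inf_le_left
  have hfV : finrank ℂ V = finrank ℂ A + 1 := by omega
  have hup : ∀ (f : M →ₗ[ℂ] M), finrank ℂ (V.map f) ≤ finrank ℂ (A.map f) + 1 := by
    intro f
    have := finrank_map_le_aux hAV f
    omega
  have hPconc : ∀ j, finrank ℂ (V.map (P j)) = finrank ℂ (A.map (P j)) + chi tP j := by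
    intro j
    by_cases hj : tP ≤ j
    · have hCj : finrank ℂ (C.map (P j)) = finrank ℂ (A.map (P j)) + 2 := by
        have := hCP j; unfold chi at this
        rw [if_pos (by omega), if_pos (by omega)] at this; omega
      have h1 := finrank_map_le_aux hVC (P j)
      have h2 := hup (P j)
      unfold chi; rw [if_pos hj]; omega
    · have hh : V.map (P j) = A.map (P j) := by
        rw [hP (by omega : j ≤ j₁) V, hVmap, ← hP (by omega : j ≤ j₁) A]
      unfold chi; rw [if_neg hj, hh, Nat.add_zero]
  have hopen : finrank ℂ (V.map (Q sQ)) = finrank ℂ (A.map (Q sQ)) + 1 := by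
    by_contra hcon
    have hle := hup (Q sQ)
    have hge : finrank ℂ (A.map (Q sQ)) ≤ finrank ℂ (V.map (Q sQ)) :=
      Submodule.finrank_mono (Submodule.map_mono hAV)
    have hCQs : finrank ℂ (C.map (Q sQ)) = finrank ℂ (A.map (Q sQ)) + 1 := by
      have := hCQ sQ; unfold chi at this
      rw [if_pos le_rfl, if_neg (by omega)] at this; omega
    obtain ⟨hAW, hWmap, hWfr⟩ := ker_sub (Q sQ) hAC hCQs
    set W := C ⊓ Submodule.comap (Q sQ) (A.map (Q sQ)) with hWdef
    have hVW : V ≤ W := by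
      refine le_inf hVC ?_
      rw [← Submodule.map_le_iff_le_comap, map_squeeze hAV (Q sQ) (by omega)]
    have hVeqW : V = W := Submodule.eq_of_le_of_finrank_le hVW (by omega)
    have hBW : B ≤ W := by
      refine le_inf hBC ?_
      rw [← Submodule.map_le_iff_le_comap]
      have hBQs : finrank ℂ (B.map (Q sQ)) ≤ finrank ℂ (A.map (Q sQ)) := by
        have := hBQ sQ; unfold chi at this; rw [if_neg (by omega)] at this; omega
      rw [map_squeeze hAB (Q sQ) hBQs]
    have hBV : B = V := by
      refine Submodule.eq_of_le_of_finrank_le ?_ (by omega)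
      rw [hVeqW]; exact hBW
    have hBmap : finrank ℂ (B.map (P j₁)) = finrank ℂ (A.map (P j₁)) := by
      rw [hBV, hVmap]
    have := hBP j₁; unfold chi at this; rw [if_pos (by omega)] at this; omega
  have hQconc : ∀ j, finrank ℂ (V.map (Q j)) = finrank ℂ (A.map (Q j)) + chi sQ j := by
    intro j
    by_cases hj : sQ ≤ j
    · unfold chi; rw [if_pos hj]
      have hle := hup (Q j)
      have hge : finrank ℂ (A.map (Q j)) ≤ finrank ℂ (V.map (Q j)) :=
        Submodule.finrank_mono (Submodule.map_mono hAV)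
      by_contra hcon
      have heq : V.map (Q j) = A.map (Q j) := map_squeeze hAV (Q j) (by omega)
      have hh : V.map (Q sQ) = A.map (Q sQ) := by
        rw [hQ hj V, heq, ← hQ hj A]
      rw [hh] at hopen; omega
    · have hCj : finrank ℂ (C.map (Q j)) = finrank ℂ (A.map (Q j)) := by
        have := hCQ j; unfold chi at this
        rw [if_neg (by omega), if_neg (by omega)] at this; omega
      have h1 : finrank ℂ (V.map (Q j)) ≤ finrank ℂ (C.map (Q j)) :=
        Submodule.finrank_mono (Submodule.map_mono hVC)
      have hge : finrank ℂ (A.map (Q j)) ≤ finrank ℂ (V.map (Q j)) :=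
        Submodule.finrank_mono (Submodule.map_mono hAV)
      unfold chi; rw [if_neg hj]; omega
  exact ⟨V, hAV, hVC, hfV, hPconc, hQconc⟩

/-! ### coordProj and counting lemmas -/

open scoped Classical in
lemma coordProj_apply {n : ℕ} (S : Set (Fin n)) (v : Fin n → ℂ) (m : Fin n) :
    coordProj n S v m = if m ∈ S then v m else 0 := rfl

lemma coordProj_comp {n : ℕ} {S T : Set (Fin n)} (h : S ⊆ T) :
    (coordProj n S).comp (coordProj n T) = coordProj n S := by
  apply LinearMap.ext; intro v; funext m
  simp only [LinearMap.comp_apply, coordProj_apply]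
  by_cases hm : m ∈ S
  · rw [if_pos hm, if_pos hm, if_pos (h hm)]
  · rw [if_neg hm, if_neg hm]

lemma map_coordProj_factor {n : ℕ} {S T : Set (Fin n)} (h : S ⊆ T)
    (V : Submodule ℂ (Fin n → ℂ)) :
    V.map (coordProj n S) = (V.map (coordProj n T)).map (coordProj n S) := by
  rw [← Submodule.map_comp, coordProj_comp h]

lemma swap_val {n : ℕ} (i : ℕ) (hi : i + 1 < n) (m : Fin n) :
    ((Equiv.swap (⟨i, by omega⟩ : Fin n) ⟨i+1, hi⟩) m : ℕ)
      = if (m:ℕ) = i then i+1 else if (m:ℕ) = i+1 then i else (m:ℕ) := by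
  by_cases h1 : m = (⟨i, by omega⟩ : Fin n)
  · subst h1; rw [Equiv.swap_apply_left]; simp
  · by_cases h2 : m = (⟨i+1, hi⟩ : Fin n)
    · subst h2; rw [Equiv.swap_apply_right]; simp
    · rw [Equiv.swap_apply_of_ne_of_ne h1 h2]
      have v1 : (m:ℕ) ≠ i := fun h => h1 (Fin.ext h)
      have v2 : (m:ℕ) ≠ i+1 := fun h => h2 (Fin.ext h)
      rw [if_neg v1, if_neg v2]

lemma swap_apply_small {n : ℕ} (i : ℕ) (hi : i + 1 < n) {m : Fin n} (hm : (m:ℕ) < i) :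
    (Equiv.swap (⟨i, by omega⟩ : Fin n) ⟨i+1, hi⟩) m = m := by
  apply Equiv.swap_apply_of_ne_of_ne
  · exact Fin.ne_of_val_ne (show (m:ℕ) ≠ i by omega)
  · exact Fin.ne_of_val_ne (show (m:ℕ) ≠ i + 1 by omega)

noncomputable def Dgen {n : ℕ} (c : Fin n → Prop) (a : ℕ) : ℕ :=
  Set.ncard {m : Fin n | (m:ℕ) < a ∧ c m}

lemma Dgen_zero {n : ℕ} (c : Fin n → Prop) : Dgen c 0 = 0 := by
  unfold Dgen
  have h : {m : Fin n | (m:ℕ) < 0 ∧ c m} = ∅ := by ext m; simp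
  rw [h, Set.ncard_empty]

lemma Dgen_succ {n : ℕ} (c : Fin n → Prop) (a : ℕ) (ha : a < n)
    [inst : Decidable (c ⟨a, ha⟩)] :
    Dgen c (a+1) = Dgen c a + (if c ⟨a, ha⟩ then 1 else 0) := by
  unfold Dgen
  by_cases hc : c ⟨a, ha⟩
  · rw [if_pos hc]
    have hset : {m : Fin n | (m:ℕ) < a + 1 ∧ c m}
        = insert (⟨a, ha⟩ : Fin n) {m : Fin n | (m:ℕ) < a ∧ c m} := by
      ext m
      simp only [Set.mem_setOf_eq, Set.mem_insert_iff]
      constructor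
      · rintro ⟨hm, hcm⟩
        rcases Nat.lt_succ_iff_lt_or_eq.mp hm with h | h
        · exact Or.inr ⟨h, hcm⟩
        · exact Or.inl (Fin.ext h)
      · rintro (rfl | ⟨hm, hcm⟩)
        · exact ⟨Nat.lt_succ_self a, hc⟩
        · exact ⟨by omega, hcm⟩
    rw [hset, Set.ncard_insert_of_notMem (by simp)]
  · rw [if_neg hc, Nat.add_zero]
    congr 1
    ext m
    simp only [Set.mem_setOf_eq]
    constructor
    · rintro ⟨hm, hcm⟩
      rcases Nat.lt_succ_iff_lt_or_eq.mp hm with h | h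
      · exact ⟨h, hcm⟩
      · exact absurd hcm (by rwa [show m = (⟨a, ha⟩ : Fin n) from Fin.ext h])
    · rintro ⟨hm, hcm⟩; exact ⟨by omega, hcm⟩

lemma ncard_le_eq_Dgen {n : ℕ} (c : Fin n → Prop) (a : ℕ) :
    Set.ncard {m : Fin n | (m:ℕ) ≤ a ∧ c m} = Dgen c (a+1) := by
  unfold Dgen
  congr 1
  ext m
  simp only [Set.mem_setOf_eq]
  exact and_congr_left' (by omega)

lemma Dgen_congr {n : ℕ} {c c' : Fin n → Prop} (h : ∀ m : Fin n, (m:ℕ) < a → (c m ↔ c' m)) :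
    Dgen c a = Dgen c' a := by
  unfold Dgen; congr 1; ext m; simp only [Set.mem_setOf_eq]
  exact ⟨fun ⟨h1, h2⟩ => ⟨h1, (h m h1).mp h2⟩, fun ⟨h1, h2⟩ => ⟨h1, (h m h1).mpr h2⟩⟩

lemma ncard_swap {n : ℕ} (i : ℕ) (hi : i + 1 < n) {a : ℕ} (ha : a ≠ i) (c : Fin n → Prop) :
    Set.ncard {m : Fin n | (m:ℕ) ≤ a ∧ c (Equiv.swap (⟨i, by omega⟩ : Fin n) ⟨i+1, hi⟩ m)}
      = Set.ncard {m : Fin n | (m:ℕ) ≤ a ∧ c m} := by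
  set s := Equiv.swap (⟨i, by omega⟩ : Fin n) ⟨i+1, hi⟩ with hs
  have hpre : {m : Fin n | (m:ℕ) ≤ a ∧ c (s m)}
      = ⇑s ⁻¹' {m : Fin n | (m:ℕ) ≤ a ∧ c m} := by
    ext m
    simp only [Set.mem_setOf_eq, Set.mem_preimage]
    have hv := swap_val i hi m
    rw [← hs] at hv
    constructor
    · rintro ⟨hm, hcm⟩
      refine ⟨?_, hcm⟩
      rw [hv]; split_ifs <;> omega
    · rintro ⟨hm, hcm⟩
      refine ⟨?_, hcm⟩
      rw [hv] at hm; split_ifs at hm <;> omega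
  rw [hpre]
  rw [show ⇑s ⁻¹' {m : Fin n | (m:ℕ) ≤ a ∧ c m} = ⇑s.symm '' {m : Fin n | (m:ℕ) ≤ a ∧ c m} by
    rw [Equiv.image_eq_preimage_symm s.symm]; simp]
  exact Set.ncard_image_of_injective _ s.symm.injective

/-! ### Cell extraction -/

lemma cell_top_small {n : ℕ} {u : Equiv.Perm (Fin n)} {G : Fin (n+1) → Submodule ℂ (Fin n → ℂ)}
    (hG : IsCompleteFlag n G) (hc : InOpenSchubertCell n u G) (a : ℕ) (ha : a ≤ n)
    (j : ℕ) (hj : j < n) :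
    Module.finrank ℂ ((G ⟨a, by omega⟩).map (coordProj n {m : Fin n | (m:ℕ) ≤ j}))
      = Dgen (fun m => (u m : ℕ) ≤ j) a := by
  match a with
  | 0 =>
    have h0 : G ⟨0, by omega⟩ = ⊥ := Submodule.finrank_eq_zero.mp (hG.2 ⟨0, by omega⟩)
    rw [h0, Submodule.map_bot, finrank_bot, Dgen_zero]
  | (b+1) =>
    have hb : b < n := by omega
    have h : Module.finrank ℂ ((G ⟨b+1, by omega⟩).map
        (coordProj n {m : Fin n | (m:ℕ) ≤ j}))
        = Set.ncard {m : Fin n | (m:ℕ) ≤ b ∧ (u m : ℕ) ≤ j} := hc ⟨b, hb⟩ ⟨j, hj⟩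
    rw [h, ncard_le_eq_Dgen]

lemma cell_top {n : ℕ} {u : Equiv.Perm (Fin n)} {G : Fin (n+1) → Submodule ℂ (Fin n → ℂ)}
    (hG : IsCompleteFlag n G) (hc : InOpenSchubertCell n u G) (a : ℕ) (ha : a ≤ n)
    (j : ℕ) :
    Module.finrank ℂ ((G ⟨a, by omega⟩).map (coordProj n {m : Fin n | (m:ℕ) ≤ j}))
      = Dgen (fun m => (u m : ℕ) ≤ j) a := by
  rcases Nat.eq_zero_or_pos n with h0 | hn
  · have ha0 : a = 0 := by omega
    subst ha0
    rw [Submodule.finrank_eq_zero.mp (hG.2 ⟨0, by omega⟩), Submodule.map_bot, finrank_bot,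
      Dgen_zero]
  · by_cases hj : j < n
    · exact cell_top_small hG hc a ha j hj
    · have hset : {m : Fin n | (m:ℕ) ≤ j} = {m : Fin n | (m:ℕ) ≤ n - 1} := by
        ext m; simp only [Set.mem_setOf_eq]; have := m.isLt; omega
      have hcond : ∀ m : Fin n, (m:ℕ) < a → (((u m : ℕ) ≤ j) ↔ ((u m : ℕ) ≤ n - 1)) := by
        intro m _; have := (u m).isLt; omega
      rw [hset, Dgen_congr hcond]
      exact cell_top_small hG hc a ha (n-1) (by omega)

lemma cell_bot_small {n : ℕ} {w : Equiv.Perm (Fin n)} {G : Fin (n+1) → Submodule ℂ (Fin n → ℂ)}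
    (hG : IsCompleteFlag n G) (hc : InOpenOppSchubertCell n w G) (a : ℕ) (ha : a ≤ n)
    (j : ℕ) (hj : j < n) :
    Module.finrank ℂ ((G ⟨a, by omega⟩).map (coordProj n {m : Fin n | n ≤ (m:ℕ) + j + 1}))
      = Dgen (fun m => n ≤ (w m : ℕ) + j + 1) a := by
  match a with
  | 0 =>
    have h0 : G ⟨0, by omega⟩ = ⊥ := Submodule.finrank_eq_zero.mp (hG.2 ⟨0, by omega⟩)
    rw [h0, Submodule.map_bot, finrank_bot, Dgen_zero]
  | (b+1) =>
    have hb : b < n := by omega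
    have h : Module.finrank ℂ ((G ⟨b+1, by omega⟩).map
        (coordProj n {m : Fin n | n ≤ (m:ℕ) + j + 1}))
        = Set.ncard {m : Fin n | (m:ℕ) ≤ b ∧ n ≤ (w m : ℕ) + j + 1} := hc ⟨b, hb⟩ ⟨j, hj⟩
    rw [h, ncard_le_eq_Dgen]

lemma cell_bot {n : ℕ} {w : Equiv.Perm (Fin n)} {G : Fin (n+1) → Submodule ℂ (Fin n → ℂ)}
    (hG : IsCompleteFlag n G) (hc : InOpenOppSchubertCell n w G) (a : ℕ) (ha : a ≤ n)
    (j : ℕ) :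
    Module.finrank ℂ ((G ⟨a, by omega⟩).map (coordProj n {m : Fin n | n ≤ (m:ℕ) + j + 1}))
      = Dgen (fun m => n ≤ (w m : ℕ) + j + 1) a := by
  rcases Nat.eq_zero_or_pos n with h0 | hn
  · have ha0 : a = 0 := by omega
    subst ha0
    rw [Submodule.finrank_eq_zero.mp (hG.2 ⟨0, by omega⟩), Submodule.map_bot, finrank_bot,
      Dgen_zero]
  · by_cases hj : j < n
    · exact cell_bot_small hG hc a ha j hj
    · have hset : {m : Fin n | n ≤ (m:ℕ) + j + 1} = {m : Fin n | n ≤ (m:ℕ) + (n-1) + 1} := by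
        ext m; simp only [Set.mem_setOf_eq]; have := m.isLt; omega
      have hcond : ∀ m : Fin n, (m:ℕ) < a →
          ((n ≤ (w m : ℕ) + j + 1) ↔ (n ≤ (w m : ℕ) + (n-1) + 1)) := by
        intro m _; have := (w m).isLt; omega
      rw [hset, Dgen_congr hcond]
      exact cell_bot_small hG hc a ha (n-1) (by omega)

end Stmt10Aux

namespace Stmt10Aux

open Module Submodule

lemma rebuild {n k : ℕ} (hk : k ≤ n) (i : ℕ) (hi : i + 1 < n) (hik : i + 1 ≠ k)
    (u' w' : Equiv.Perm (Fin n)) {G : Fin (n+1) → Submodule ℂ (Fin n → ℂ)}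
    (hG : IsCompleteFlag n G)
    (hot : ∀ a : Fin n, (a:ℕ) ≠ i → ∀ j : Fin n,
      Module.finrank ℂ ((G a.succ).map (coordProj n {m : Fin n | (m : ℕ) ≤ (j : ℕ)})) =
        ({m : Fin n | (m : ℕ) ≤ (a : ℕ) ∧ ((u' m : ℕ)) ≤ (j : ℕ)}).ncard)
    (hob : ∀ a : Fin n, (a:ℕ) ≠ i → ∀ j : Fin n,
      Module.finrank ℂ ((G a.succ).map (coordProj n {m : Fin n | n ≤ (m : ℕ) + (j : ℕ) + 1})) =
        ({m : Fin n | (m : ℕ) ≤ (a : ℕ) ∧ n ≤ ((w' m : ℕ)) + (j : ℕ) + 1}).ncard)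
    {V : Submodule ℂ (Fin n → ℂ)}
    (hAV : G ⟨i, by omega⟩ ≤ V) (hVC : V ≤ G ⟨i+2, by omega⟩)
    (hfV : Module.finrank ℂ V = i + 1)
    (hVt : ∀ j : Fin n,
      Module.finrank ℂ (V.map (coordProj n {m : Fin n | (m : ℕ) ≤ (j : ℕ)})) =
        ({m : Fin n | (m : ℕ) ≤ i ∧ ((u' m : ℕ)) ≤ (j : ℕ)}).ncard)
    (hVb : ∀ j : Fin n,
      Module.finrank ℂ (V.map (coordProj n {m : Fin n | n ≤ (m : ℕ) + (j : ℕ) + 1})) =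
        ({m : Fin n | (m : ℕ) ≤ i ∧ n ≤ ((w' m : ℕ)) + (j : ℕ) + 1}).ncard) :
    ∃ G' : Fin (n + 1) → Submodule ℂ (Fin n → ℂ), IsCompleteFlag n G' ∧
      InOpenSchubertCell n u' G' ∧ InOpenOppSchubertCell n w' G' ∧
      G' ⟨k, by omega⟩ = G ⟨k, by omega⟩ := by
  classical
  set idx : Fin (n+1) := ⟨i+1, by omega⟩ with hidx
  refine ⟨Function.update G idx V, ⟨?_, ?_⟩, ?_, ?_, ?_⟩
  · -- Monotone
    apply Fin.monotone_iff_le_succ.mpr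
    intro b
    by_cases hb1 : (b:ℕ) = i
    · have e1 : b.castSucc ≠ idx := Fin.ne_of_val_ne (show (b:ℕ) ≠ i + 1 by omega)
      have e2 : b.succ = idx := Fin.ext (show (b:ℕ) + 1 = i + 1 by omega)
      rw [Function.update_of_ne e1, e2, Function.update_self]
      have e3 : b.castSucc = (⟨i, by omega⟩ : Fin (n+1)) :=
        Fin.ext (show (b:ℕ) = i from hb1)
      rw [e3]; exact hAV
    · by_cases hb2 : (b:ℕ) = i + 1
      · have e1 : b.castSucc = idx := Fin.ext (show (b:ℕ) = i + 1 from hb2)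
        have e2 : b.succ ≠ idx := Fin.ne_of_val_ne (show (b:ℕ) + 1 ≠ i + 1 by omega)
        rw [e1, Function.update_self, Function.update_of_ne e2]
        have e3 : b.succ = (⟨i+2, by omega⟩ : Fin (n+1)) :=
          Fin.ext (show (b:ℕ) + 1 = i + 2 by omega)
        rw [e3]; exact hVC
      · have e1 : b.castSucc ≠ idx := Fin.ne_of_val_ne (show (b:ℕ) ≠ i + 1 by omega)
        have e2 : b.succ ≠ idx := Fin.ne_of_val_ne (show (b:ℕ) + 1 ≠ i + 1 by omega)
        rw [Function.update_of_ne e1, Function.update_of_ne e2]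
        exact hG.1 (Fin.castSucc_lt_succ : b.castSucc < b.succ).le
  · -- finrank
    intro c
    by_cases hc : c = idx
    · subst hc; rw [Function.update_self]; exact hfV
    · rw [Function.update_of_ne hc]; exact hG.2 c
  · -- top cells
    intro a j
    by_cases ha : (a:ℕ) = i
    · have e : a.succ = idx := Fin.ext (show (a:ℕ) + 1 = i + 1 by omega)
      rw [e, Function.update_self, show (a:ℕ) = i from ha]
      exact hVt j
    · have e : a.succ ≠ idx := Fin.ne_of_val_ne (show (a:ℕ) + 1 ≠ i + 1 by omega)
      rw [Function.update_of_ne e]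
      exact hot a ha j
  · -- bottom cells
    intro a j
    by_cases ha : (a:ℕ) = i
    · have e : a.succ = idx := Fin.ext (show (a:ℕ) + 1 = i + 1 by omega)
      rw [e, Function.update_self, show (a:ℕ) = i from ha]
      exact hVb j
    · have e : a.succ ≠ idx := Fin.ne_of_val_ne (show (a:ℕ) + 1 ≠ i + 1 by omega)
      rw [Function.update_of_ne e]
      exact hob a ha j
  · -- k unchanged
    have e : (⟨k, by omega⟩ : Fin (n+1)) ≠ idx := Fin.ne_of_val_ne (show k ≠ i + 1 by omega)
    rw [Function.update_of_ne e]

end Stmt10Aux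

namespace Stmt10Aux

open Module Submodule

lemma ncard_swap_at_i {n : ℕ} (i : ℕ) (hi : i + 1 < n) (c : Fin n → Prop) [DecidablePred c] :
    Set.ncard {m : Fin n | (m:ℕ) ≤ i ∧ c (Equiv.swap (⟨i, by omega⟩ : Fin n) ⟨i+1, hi⟩ m)}
      = Dgen c i + (if c ⟨i+1, hi⟩ then 1 else 0) := by
  rw [ncard_le_eq_Dgen, Dgen_succ _ i (by omega)]
  congr 1
  · apply Dgen_congr; intro m hm
    rw [swap_apply_small i hi hm]
  · have hsl : (Equiv.swap (⟨i, by omega⟩ : Fin n) ⟨i+1, hi⟩) ⟨i, by omega⟩ = ⟨i+1, hi⟩ :=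
      Equiv.swap_apply_left _ _
    simp only [hsl]

lemma stepAsc {n k : ℕ} (hk : k ≤ n) (i : ℕ) (hi : i + 1 < n) (hik : i + 1 ≠ k)
    (u w : Equiv.Perm (Fin n)) (pf0 : i < n)
    (hu : u ⟨i, pf0⟩ < u ⟨i+1, hi⟩) (hw : w ⟨i, pf0⟩ < w ⟨i+1, hi⟩)
    {G : Fin (n+1) → Submodule ℂ (Fin n → ℂ)}
    (hG : IsCompleteFlag n G) (hcu : InOpenSchubertCell n u G)
    (hcw : InOpenOppSchubertCell n w G) :
    ∃ G' : Fin (n + 1) → Submodule ℂ (Fin n → ℂ), IsCompleteFlag n G' ∧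
      InOpenSchubertCell n (u * Equiv.swap ⟨i, pf0⟩ ⟨i+1, hi⟩) G' ∧
      InOpenOppSchubertCell n (w * Equiv.swap ⟨i, pf0⟩ ⟨i+1, hi⟩) G' ∧
      G' ⟨k, by omega⟩ = G ⟨k, by omega⟩ := by
  have hiw1 : (w ⟨i+1, hi⟩ : ℕ) < n := (w ⟨i+1, hi⟩).isLt
  have hiw0 : (w ⟨i, pf0⟩ : ℕ) < n := (w ⟨i, pf0⟩).isLt
  have hunat : (u ⟨i, pf0⟩ : ℕ) < (u ⟨i+1, hi⟩ : ℕ) := hu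
  have hwnat : (w ⟨i, pf0⟩ : ℕ) < (w ⟨i+1, hi⟩ : ℕ) := hw
  -- the four rank-difference hypotheses
  have hCP : ∀ j : ℕ,
      finrank ℂ ((G ⟨i+2, by omega⟩).map (coordProj n {m : Fin n | (m:ℕ) ≤ j}))
      = finrank ℂ ((G ⟨i, by omega⟩).map (coordProj n {m : Fin n | (m:ℕ) ≤ j}))
        + chi (u ⟨i, pf0⟩ : ℕ) j + chi (u ⟨i+1, hi⟩ : ℕ) j := by
    intro j
    have h2 : finrank ℂ ((G ⟨i+2, by omega⟩).map (coordProj n {m : Fin n | (m:ℕ) ≤ j}))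
        = Dgen (fun m => (u m : ℕ) ≤ j) ((i+1)+1) := cell_top hG hcu ((i+1)+1) (by omega) j
    have h0 : finrank ℂ ((G ⟨i, by omega⟩).map (coordProj n {m : Fin n | (m:ℕ) ≤ j}))
        = Dgen (fun m => (u m : ℕ) ≤ j) i := cell_top hG hcu i (by omega) j
    have e2 : Dgen (fun m => (u m : ℕ) ≤ j) ((i+1)+1)
        = Dgen (fun m => (u m : ℕ) ≤ j) (i+1) + (if (u ⟨i+1, hi⟩ : ℕ) ≤ j then 1 else 0) :=
      Dgen_succ _ (i+1) hi
    have e1 : Dgen (fun m => (u m : ℕ) ≤ j) (i+1)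
        = Dgen (fun m => (u m : ℕ) ≤ j) i + (if (u ⟨i, pf0⟩ : ℕ) ≤ j then 1 else 0) :=
      Dgen_succ _ i pf0
    rw [h2, e2, e1, h0]
    unfold chi
    rfl
  have hBP : ∀ j : ℕ,
      finrank ℂ ((G ⟨i+1, by omega⟩).map (coordProj n {m : Fin n | (m:ℕ) ≤ j}))
      = finrank ℂ ((G ⟨i, by omega⟩).map (coordProj n {m : Fin n | (m:ℕ) ≤ j}))
        + chi (u ⟨i, pf0⟩ : ℕ) j := by
    intro j
    have h1 : finrank ℂ ((G ⟨i+1, by omega⟩).map (coordProj n {m : Fin n | (m:ℕ) ≤ j}))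
        = Dgen (fun m => (u m : ℕ) ≤ j) (i+1) := cell_top hG hcu (i+1) (by omega) j
    have h0 : finrank ℂ ((G ⟨i, by omega⟩).map (coordProj n {m : Fin n | (m:ℕ) ≤ j}))
        = Dgen (fun m => (u m : ℕ) ≤ j) i := cell_top hG hcu i (by omega) j
    have e1 : Dgen (fun m => (u m : ℕ) ≤ j) (i+1)
        = Dgen (fun m => (u m : ℕ) ≤ j) i + (if (u ⟨i, pf0⟩ : ℕ) ≤ j then 1 else 0) :=
      Dgen_succ _ i pf0
    rw [h1, e1, h0]
    unfold chi
    rfl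
  have cw0 : ∀ j : ℕ, (if n ≤ (w ⟨i, pf0⟩ : ℕ) + j + 1 then 1 else 0 : ℕ)
      = chi (n - 1 - (w ⟨i, pf0⟩ : ℕ)) j := by
    intro j
    unfold chi
    by_cases hx : n ≤ (w ⟨i, pf0⟩ : ℕ) + j + 1
    · rw [if_pos hx, if_pos (by omega)]
    · rw [if_neg hx, if_neg (by omega)]
  have cw1 : ∀ j : ℕ, (if n ≤ (w ⟨i+1, hi⟩ : ℕ) + j + 1 then 1 else 0 : ℕ)
      = chi (n - 1 - (w ⟨i+1, hi⟩ : ℕ)) j := by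
    intro j
    unfold chi
    by_cases hx : n ≤ (w ⟨i+1, hi⟩ : ℕ) + j + 1
    · rw [if_pos hx, if_pos (by omega)]
    · rw [if_neg hx, if_neg (by omega)]
  have hCQ : ∀ j : ℕ,
      finrank ℂ ((G ⟨i+2, by omega⟩).map (coordProj n {m : Fin n | n ≤ (m:ℕ) + j + 1}))
      = finrank ℂ ((G ⟨i, by omega⟩).map (coordProj n {m : Fin n | n ≤ (m:ℕ) + j + 1}))
        + chi (n - 1 - (w ⟨i+1, hi⟩ : ℕ)) j + chi (n - 1 - (w ⟨i, pf0⟩ : ℕ)) j := by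
    intro j
    have h2 : finrank ℂ ((G ⟨i+2, by omega⟩).map (coordProj n {m : Fin n | n ≤ (m:ℕ) + j + 1}))
        = Dgen (fun m => n ≤ (w m : ℕ) + j + 1) ((i+1)+1) :=
      cell_bot hG hcw ((i+1)+1) (by omega) j
    have h0 : finrank ℂ ((G ⟨i, by omega⟩).map (coordProj n {m : Fin n | n ≤ (m:ℕ) + j + 1}))
        = Dgen (fun m => n ≤ (w m : ℕ) + j + 1) i := cell_bot hG hcw i (by omega) j
    have e2 : Dgen (fun m => n ≤ (w m : ℕ) + j + 1) ((i+1)+1)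
        = Dgen (fun m => n ≤ (w m : ℕ) + j + 1) (i+1)
          + (if n ≤ (w ⟨i+1, hi⟩ : ℕ) + j + 1 then 1 else 0) :=
      Dgen_succ _ (i+1) hi
    have e1 : Dgen (fun m => n ≤ (w m : ℕ) + j + 1) (i+1)
        = Dgen (fun m => n ≤ (w m : ℕ) + j + 1) i
          + (if n ≤ (w ⟨i, pf0⟩ : ℕ) + j + 1 then 1 else 0) :=
      Dgen_succ _ i pf0
    rw [h2, e2, e1, h0, cw0 j, cw1 j]
    omega
  have hBQ : ∀ j : ℕ,
      finrank ℂ ((G ⟨i+1, by omega⟩).map (coordProj n {m : Fin n | n ≤ (m:ℕ) + j + 1}))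
      = finrank ℂ ((G ⟨i, by omega⟩).map (coordProj n {m : Fin n | n ≤ (m:ℕ) + j + 1}))
        + chi (n - 1 - (w ⟨i, pf0⟩ : ℕ)) j := by
    intro j
    have h1 : finrank ℂ ((G ⟨i+1, by omega⟩).map (coordProj n {m : Fin n | n ≤ (m:ℕ) + j + 1}))
        = Dgen (fun m => n ≤ (w m : ℕ) + j + 1) (i+1) := cell_bot hG hcw (i+1) (by omega) j
    have h0 : finrank ℂ ((G ⟨i, by omega⟩).map (coordProj n {m : Fin n | n ≤ (m:ℕ) + j + 1}))
        = Dgen (fun m => n ≤ (w m : ℕ) + j + 1) i := cell_bot hG hcw i (by omega) j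
    have e1 : Dgen (fun m => n ≤ (w m : ℕ) + j + 1) (i+1)
        = Dgen (fun m => n ≤ (w m : ℕ) + j + 1) i
          + (if n ≤ (w ⟨i, pf0⟩ : ℕ) + j + 1 then 1 else 0) :=
      Dgen_succ _ i pf0
    rw [h1, e1, h0, cw0 j]
  obtain ⟨V, hAV, hVC, hfV, hVP, hVQ⟩ := core
    (fun j => coordProj n {m : Fin n | (m:ℕ) ≤ j})
    (fun j => coordProj n {m : Fin n | n ≤ (m:ℕ) + j + 1})
    (fun {j j'} hjj V => map_coordProj_factor
      (fun m hm => by simp only [Set.mem_setOf_eq] at *; omega) V)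
    (fun {j j'} hjj V => map_coordProj_factor
      (fun m hm => by simp only [Set.mem_setOf_eq] at *; omega) V)
    (hG.1 (Fin.mk_le_mk.mpr (by omega : i ≤ i + 1)))
    (hG.1 (Fin.mk_le_mk.mpr (by omega : i + 1 ≤ i + 2)))
    (by rw [hG.2 ⟨i+1, by omega⟩, hG.2 ⟨i, by omega⟩])
    (by rw [hG.2 ⟨i+2, by omega⟩, hG.2 ⟨i, by omega⟩])
    (hunat)
    (show n - 1 - (w ⟨i+1, hi⟩ : ℕ) < n - 1 - (w ⟨i, pf0⟩ : ℕ) by omega)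
    hCP hCQ hBP hBQ
  -- feed rebuild
  have hfV' : finrank ℂ V = i + 1 := by
    rw [hfV, hG.2 ⟨i, by omega⟩]
  apply rebuild hk i hi hik _ _ hG ?_ ?_ hAV hVC hfV' ?_ ?_
  · -- hot
    intro a ha j
    exact (hcu a j).trans
      (ncard_swap i hi ha (fun m' => (u m' : ℕ) ≤ (j:ℕ))).symm
  · -- hob
    intro a ha j
    exact (hcw a j).trans
      (ncard_swap i hi ha (fun m' => n ≤ (w m' : ℕ) + (j:ℕ) + 1)).symm
  · -- hVt
    intro j
    have h0 : finrank ℂ ((G ⟨i, by omega⟩).map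
        (coordProj n {m : Fin n | (m:ℕ) ≤ (j:ℕ)}))
        = Dgen (fun m => (u m : ℕ) ≤ (j:ℕ)) i := cell_top hG hcu i (by omega) (j:ℕ)
    have h1 : finrank ℂ (V.map (coordProj n {m : Fin n | (m:ℕ) ≤ (j:ℕ)}))
        = Dgen (fun m => (u m : ℕ) ≤ (j:ℕ)) i
          + (if (u ⟨i+1, hi⟩ : ℕ) ≤ (j:ℕ) then 1 else 0) := by
      have := hVP (j:ℕ)
      rw [h0] at this
      rw [this]
      unfold chi
      rfl
    have h2 := ncard_swap_at_i i hi (fun m' => (u m' : ℕ) ≤ (j:ℕ))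
    exact h1.trans h2.symm
  · -- hVb
    intro j
    have h0 : finrank ℂ ((G ⟨i, by omega⟩).map
        (coordProj n {m : Fin n | n ≤ (m:ℕ) + (j:ℕ) + 1}))
        = Dgen (fun m => n ≤ (w m : ℕ) + (j:ℕ) + 1) i := cell_bot hG hcw i (by omega) (j:ℕ)
    have h1 : finrank ℂ (V.map (coordProj n {m : Fin n | n ≤ (m:ℕ) + (j:ℕ) + 1}))
        = Dgen (fun m => n ≤ (w m : ℕ) + (j:ℕ) + 1) i
          + (if n ≤ (w ⟨i+1, hi⟩ : ℕ) + (j:ℕ) + 1 then 1 else 0) := by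
      have hq := hVQ (j:ℕ)
      rw [h0] at hq
      rw [hq, ← cw1 (j:ℕ)]
    have h2 := ncard_swap_at_i i hi (fun m' => n ≤ (w m' : ℕ) + (j:ℕ) + 1)
    exact h1.trans h2.symm

lemma stepDesc {n k : ℕ} (hk : k ≤ n) (i : ℕ) (hi : i + 1 < n) (hik : i + 1 ≠ k)
    (u w : Equiv.Perm (Fin n)) (pf0 : i < n)
    (hu : u ⟨i+1, hi⟩ < u ⟨i, pf0⟩) (hw : w ⟨i+1, hi⟩ < w ⟨i, pf0⟩)
    {G : Fin (n+1) → Submodule ℂ (Fin n → ℂ)}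
    (hG : IsCompleteFlag n G) (hcu : InOpenSchubertCell n u G)
    (hcw : InOpenOppSchubertCell n w G) :
    ∃ G' : Fin (n + 1) → Submodule ℂ (Fin n → ℂ), IsCompleteFlag n G' ∧
      InOpenSchubertCell n (u * Equiv.swap ⟨i, pf0⟩ ⟨i+1, hi⟩) G' ∧
      InOpenOppSchubertCell n (w * Equiv.swap ⟨i, pf0⟩ ⟨i+1, hi⟩) G' ∧
      G' ⟨k, by omega⟩ = G ⟨k, by omega⟩ := by
  have hiw1 : (w ⟨i+1, hi⟩ : ℕ) < n := (w ⟨i+1, hi⟩).isLt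
  have hiw0 : (w ⟨i, pf0⟩ : ℕ) < n := (w ⟨i, pf0⟩).isLt
  have hunat : (u ⟨i+1, hi⟩ : ℕ) < (u ⟨i, pf0⟩ : ℕ) := hu
  have hwnat : (w ⟨i+1, hi⟩ : ℕ) < (w ⟨i, pf0⟩ : ℕ) := hw
  -- the four rank-difference hypotheses
  have hCP : ∀ j : ℕ,
      finrank ℂ ((G ⟨i+2, by omega⟩).map (coordProj n {m : Fin n | (m:ℕ) ≤ j}))
      = finrank ℂ ((G ⟨i, by omega⟩).map (coordProj n {m : Fin n | (m:ℕ) ≤ j}))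
        + chi (u ⟨i+1, hi⟩ : ℕ) j + chi (u ⟨i, pf0⟩ : ℕ) j := by
    intro j
    have h2 : finrank ℂ ((G ⟨i+2, by omega⟩).map (coordProj n {m : Fin n | (m:ℕ) ≤ j}))
        = Dgen (fun m => (u m : ℕ) ≤ j) ((i+1)+1) := cell_top hG hcu ((i+1)+1) (by omega) j
    have h0 : finrank ℂ ((G ⟨i, by omega⟩).map (coordProj n {m : Fin n | (m:ℕ) ≤ j}))
        = Dgen (fun m => (u m : ℕ) ≤ j) i := cell_top hG hcu i (by omega) j
    have e2 : Dgen (fun m => (u m : ℕ) ≤ j) ((i+1)+1)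
        = Dgen (fun m => (u m : ℕ) ≤ j) (i+1) + (if (u ⟨i+1, hi⟩ : ℕ) ≤ j then 1 else 0) :=
      Dgen_succ _ (i+1) hi
    have e1 : Dgen (fun m => (u m : ℕ) ≤ j) (i+1)
        = Dgen (fun m => (u m : ℕ) ≤ j) i + (if (u ⟨i, pf0⟩ : ℕ) ≤ j then 1 else 0) :=
      Dgen_succ _ i pf0
    rw [h2, e2, e1, h0]
    unfold chi
    omega
  have hBP : ∀ j : ℕ,
      finrank ℂ ((G ⟨i+1, by omega⟩).map (coordProj n {m : Fin n | (m:ℕ) ≤ j}))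
      = finrank ℂ ((G ⟨i, by omega⟩).map (coordProj n {m : Fin n | (m:ℕ) ≤ j}))
        + chi (u ⟨i, pf0⟩ : ℕ) j := by
    intro j
    have h1 : finrank ℂ ((G ⟨i+1, by omega⟩).map (coordProj n {m : Fin n | (m:ℕ) ≤ j}))
        = Dgen (fun m => (u m : ℕ) ≤ j) (i+1) := cell_top hG hcu (i+1) (by omega) j
    have h0 : finrank ℂ ((G ⟨i, by omega⟩).map (coordProj n {m : Fin n | (m:ℕ) ≤ j}))
        = Dgen (fun m => (u m : ℕ) ≤ j) i := cell_top hG hcu i (by omega) j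
    have e1 : Dgen (fun m => (u m : ℕ) ≤ j) (i+1)
        = Dgen (fun m => (u m : ℕ) ≤ j) i + (if (u ⟨i, pf0⟩ : ℕ) ≤ j then 1 else 0) :=
      Dgen_succ _ i pf0
    rw [h1, e1, h0]
    unfold chi
    rfl
  have cw0 : ∀ j : ℕ, (if n ≤ (w ⟨i, pf0⟩ : ℕ) + j + 1 then 1 else 0 : ℕ)
      = chi (n - 1 - (w ⟨i, pf0⟩ : ℕ)) j := by
    intro j
    unfold chi
    by_cases hx : n ≤ (w ⟨i, pf0⟩ : ℕ) + j + 1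
    · rw [if_pos hx, if_pos (by omega)]
    · rw [if_neg hx, if_neg (by omega)]
  have cw1 : ∀ j : ℕ, (if n ≤ (w ⟨i+1, hi⟩ : ℕ) + j + 1 then 1 else 0 : ℕ)
      = chi (n - 1 - (w ⟨i+1, hi⟩ : ℕ)) j := by
    intro j
    unfold chi
    by_cases hx : n ≤ (w ⟨i+1, hi⟩ : ℕ) + j + 1
    · rw [if_pos hx, if_pos (by omega)]
    · rw [if_neg hx, if_neg (by omega)]
  have hCQ : ∀ j : ℕ,
      finrank ℂ ((G ⟨i+2, by omega⟩).map (coordProj n {m : Fin n | n ≤ (m:ℕ) + j + 1}))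
      = finrank ℂ ((G ⟨i, by omega⟩).map (coordProj n {m : Fin n | n ≤ (m:ℕ) + j + 1}))
        + chi (n - 1 - (w ⟨i, pf0⟩ : ℕ)) j + chi (n - 1 - (w ⟨i+1, hi⟩ : ℕ)) j := by
    intro j
    have h2 : finrank ℂ ((G ⟨i+2, by omega⟩).map (coordProj n {m : Fin n | n ≤ (m:ℕ) + j + 1}))
        = Dgen (fun m => n ≤ (w m : ℕ) + j + 1) ((i+1)+1) :=
      cell_bot hG hcw ((i+1)+1) (by omega) j
    have h0 : finrank ℂ ((G ⟨i, by omega⟩).map (coordProj n {m : Fin n | n ≤ (m:ℕ) + j + 1}))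
        = Dgen (fun m => n ≤ (w m : ℕ) + j + 1) i := cell_bot hG hcw i (by omega) j
    have e2 : Dgen (fun m => n ≤ (w m : ℕ) + j + 1) ((i+1)+1)
        = Dgen (fun m => n ≤ (w m : ℕ) + j + 1) (i+1)
          + (if n ≤ (w ⟨i+1, hi⟩ : ℕ) + j + 1 then 1 else 0) :=
      Dgen_succ _ (i+1) hi
    have e1 : Dgen (fun m => n ≤ (w m : ℕ) + j + 1) (i+1)
        = Dgen (fun m => n ≤ (w m : ℕ) + j + 1) i
          + (if n ≤ (w ⟨i, pf0⟩ : ℕ) + j + 1 then 1 else 0) :=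
      Dgen_succ _ i pf0
    rw [h2, e2, e1, h0, cw0 j, cw1 j]
  have hBQ : ∀ j : ℕ,
      finrank ℂ ((G ⟨i+1, by omega⟩).map (coordProj n {m : Fin n | n ≤ (m:ℕ) + j + 1}))
      = finrank ℂ ((G ⟨i, by omega⟩).map (coordProj n {m : Fin n | n ≤ (m:ℕ) + j + 1}))
        + chi (n - 1 - (w ⟨i, pf0⟩ : ℕ)) j := by
    intro j
    have h1 : finrank ℂ ((G ⟨i+1, by omega⟩).map (coordProj n {m : Fin n | n ≤ (m:ℕ) + j + 1}))
        = Dgen (fun m => n ≤ (w m : ℕ) + j + 1) (i+1) := cell_bot hG hcw (i+1) (by omega) j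
    have h0 : finrank ℂ ((G ⟨i, by omega⟩).map (coordProj n {m : Fin n | n ≤ (m:ℕ) + j + 1}))
        = Dgen (fun m => n ≤ (w m : ℕ) + j + 1) i := cell_bot hG hcw i (by omega) j
    have e1 : Dgen (fun m => n ≤ (w m : ℕ) + j + 1) (i+1)
        = Dgen (fun m => n ≤ (w m : ℕ) + j + 1) i
          + (if n ≤ (w ⟨i, pf0⟩ : ℕ) + j + 1 then 1 else 0) :=
      Dgen_succ _ i pf0
    rw [h1, e1, h0, cw0 j]
  obtain ⟨V, hAV, hVC, hfV, hVQ, hVP⟩ := core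
    (fun j => coordProj n {m : Fin n | n ≤ (m:ℕ) + j + 1})
    (fun j => coordProj n {m : Fin n | (m:ℕ) ≤ j})
    (fun {j j'} hjj V => map_coordProj_factor
      (fun m hm => by simp only [Set.mem_setOf_eq] at *; omega) V)
    (fun {j j'} hjj V => map_coordProj_factor
      (fun m hm => by simp only [Set.mem_setOf_eq] at *; omega) V)
    (hG.1 (Fin.mk_le_mk.mpr (by omega : i ≤ i + 1)))
    (hG.1 (Fin.mk_le_mk.mpr (by omega : i + 1 ≤ i + 2)))
    (by rw [hG.2 ⟨i+1, by omega⟩, hG.2 ⟨i, by omega⟩])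
    (by rw [hG.2 ⟨i+2, by omega⟩, hG.2 ⟨i, by omega⟩])
    (show n - 1 - (w ⟨i, pf0⟩ : ℕ) < n - 1 - (w ⟨i+1, hi⟩ : ℕ) by omega)
    (hunat)
    hCQ hCP hBQ hBP
  -- feed rebuild
  have hfV' : finrank ℂ V = i + 1 := by
    rw [hfV, hG.2 ⟨i, by omega⟩]
  apply rebuild hk i hi hik _ _ hG ?_ ?_ hAV hVC hfV' ?_ ?_
  · -- hot
    intro a ha j
    exact (hcu a j).trans
      (ncard_swap i hi ha (fun m' => (u m' : ℕ) ≤ (j:ℕ))).symm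
  · -- hob
    intro a ha j
    exact (hcw a j).trans
      (ncard_swap i hi ha (fun m' => n ≤ (w m' : ℕ) + (j:ℕ) + 1)).symm
  · -- hVt
    intro j
    have h0 : finrank ℂ ((G ⟨i, by omega⟩).map
        (coordProj n {m : Fin n | (m:ℕ) ≤ (j:ℕ)}))
        = Dgen (fun m => (u m : ℕ) ≤ (j:ℕ)) i := cell_top hG hcu i (by omega) (j:ℕ)
    have h1 : finrank ℂ (V.map (coordProj n {m : Fin n | (m:ℕ) ≤ (j:ℕ)}))
        = Dgen (fun m => (u m : ℕ) ≤ (j:ℕ)) i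
          + (if (u ⟨i+1, hi⟩ : ℕ) ≤ (j:ℕ) then 1 else 0) := by
      have := hVP (j:ℕ)
      rw [h0] at this
      rw [this]
      unfold chi
      rfl
    have h2 := ncard_swap_at_i i hi (fun m' => (u m' : ℕ) ≤ (j:ℕ))
    exact h1.trans h2.symm
  · -- hVb
    intro j
    have h0 : finrank ℂ ((G ⟨i, by omega⟩).map
        (coordProj n {m : Fin n | n ≤ (m:ℕ) + (j:ℕ) + 1}))
        = Dgen (fun m => n ≤ (w m : ℕ) + (j:ℕ) + 1) i := cell_bot hG hcw i (by omega) (j:ℕ)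
    have h1 : finrank ℂ (V.map (coordProj n {m : Fin n | n ≤ (m:ℕ) + (j:ℕ) + 1}))
        = Dgen (fun m => n ≤ (w m : ℕ) + (j:ℕ) + 1) i
          + (if n ≤ (w ⟨i+1, hi⟩ : ℕ) + (j:ℕ) + 1 then 1 else 0) := by
      have hq := hVQ (j:ℕ)
      rw [h0] at hq
      rw [hq, ← cw1 (j:ℕ)]
    have h2 := ncard_swap_at_i i hi (fun m' => n ≤ (w m' : ℕ) + (j:ℕ) + 1)
    exact h1.trans h2.symm


end Stmt10Aux

namespace Stmt10Aux

lemma len_mul_le {n : ℕ} (u z : Equiv.Perm (Fin n)) : len n (u * z) ≤ len n u + len n z := by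
  classical
  unfold len
  rw [← Finset.card_filter_add_card_filter_not
    (s := (Finset.univ : Finset (Fin n × Fin n)).filter
      fun p => p.1 < p.2 ∧ (u * z) p.2 < (u * z) p.1) (fun p => z p.2 < z p.1)]
  have h1 : (((Finset.univ : Finset (Fin n × Fin n)).filter
      fun p => p.1 < p.2 ∧ (u * z) p.2 < (u * z) p.1).filter (fun p => z p.2 < z p.1)).card
      ≤ ((Finset.univ : Finset (Fin n × Fin n)).filter fun p => p.1 < p.2 ∧ z p.2 < z p.1).card := by
    apply Finset.card_le_card
    intro p hp
    simp only [Finset.mem_filter, Finset.mem_univ, true_and] at *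
    exact ⟨hp.1.1, hp.2⟩
  have h2 : (((Finset.univ : Finset (Fin n × Fin n)).filter
      fun p => p.1 < p.2 ∧ (u * z) p.2 < (u * z) p.1).filter (fun p => ¬ z p.2 < z p.1)).card
      ≤ ((Finset.univ : Finset (Fin n × Fin n)).filter fun p => p.1 < p.2 ∧ u p.2 < u p.1).card := by
    apply Finset.card_le_card_of_injOn (fun p => (z p.1, z p.2))
    · intro p hp
      simp only [Finset.mem_coe, Finset.mem_filter, Finset.mem_univ, true_and] at *
      obtain ⟨⟨hlt, hinv⟩, hnz⟩ := hp
      refine ⟨?_, hinv⟩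
      have hne : z p.1 ≠ z p.2 := fun h => (ne_of_lt hlt) (z.injective h)
      rcases lt_or_gt_of_ne hne with h | h
      · exact h
      · exact absurd h hnz
    · intro p _ q _ hpq
      have h1 := congrArg Prod.fst hpq
      have h2 := congrArg Prod.snd hpq
      simp only at h1 h2
      exact Prod.ext (z.injective h1) (z.injective h2)
  omega

lemma len_mul_swap {n : ℕ} (i : ℕ) (hi : i + 1 < n) (pf0 : i < n) (u : Equiv.Perm (Fin n))
    (hu : u ⟨i, pf0⟩ < u ⟨i+1, hi⟩) :
    len n (u * Equiv.swap ⟨i, pf0⟩ ⟨i+1, hi⟩) = len n u + 1 := by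
  classical
  set s := Equiv.swap (⟨i, pf0⟩ : Fin n) ⟨i+1, hi⟩ with hs
  set x0 : Fin n × Fin n := (⟨i, pf0⟩, ⟨i+1, hi⟩) with hx0
  have key : ∀ a b : Fin n, a < b → (a, b) ≠ x0 → s a < s b := by
    intro a b hab hne
    have hva := swap_val i hi a
    have hvb := swap_val i hi b
    rw [← hs] at hva hvb
    have hne' : (a:ℕ) ≠ i ∨ (b:ℕ) ≠ i+1 := by
      by_contra hcon
      push_neg at hcon
      exact hne (Prod.ext (Fin.ext hcon.1) (Fin.ext hcon.2))
    have hab' : (a:ℕ) < (b:ℕ) := hab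
    rw [Fin.lt_def, hva, hvb]
    have hbn := b.isLt
    split_ifs <;> omega
  have hsx0l : s ⟨i, pf0⟩ = ⟨i+1, hi⟩ := Equiv.swap_apply_left _ _
  have hsx0r : s ⟨i+1, hi⟩ = ⟨i, pf0⟩ := Equiv.swap_apply_right _ _
  unfold len
  set T' := (Finset.univ : Finset (Fin n × Fin n)).filter
      (fun p => p.1 < p.2 ∧ (u * s) p.2 < (u * s) p.1) with hT'
  set T := (Finset.univ : Finset (Fin n × Fin n)).filter
      (fun p => p.1 < p.2 ∧ u p.2 < u p.1) with hT
  have hx0T' : x0 ∈ T' := by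
    simp only [hT', Finset.mem_filter, Finset.mem_univ, true_and]
    constructor
    · exact Fin.mk_lt_mk.mpr (by omega)
    · show u (s ⟨i+1, hi⟩) < u (s ⟨i, pf0⟩)
      rw [hsx0r, hsx0l]
      exact hu
  have hx0T : x0 ∉ T := by
    simp only [hT, Finset.mem_filter, Finset.mem_univ, true_and, not_and]
    intro _
    exact not_lt_of_gt hu
  have hcard : (T'.erase x0).card = T.card := by
    apply Finset.card_bij' (fun p _ => (s p.1, s p.2)) (fun p _ => (s p.1, s p.2))
    · intro p hp
      rw [Finset.mem_erase] at hp
      obtain ⟨hpx, hp⟩ := hp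
      simp only [hT', Finset.mem_filter, Finset.mem_univ, true_and] at hp
      simp only [hT, Finset.mem_filter, Finset.mem_univ, true_and]
      obtain ⟨hlt, hinv⟩ := hp
      refine ⟨key p.1 p.2 hlt ?_, hinv⟩
      intro hcon
      exact hpx (by rw [← hcon])
    · intro p hp
      simp only [hT, Finset.mem_filter, Finset.mem_univ, true_and] at hp
      obtain ⟨hlt, hinv⟩ := hp
      rw [Finset.mem_erase]
      constructor
      · intro hcon
        have h1 : s p.1 = ⟨i, pf0⟩ := congrArg Prod.fst hcon
        have h2 : s p.2 = ⟨i+1, hi⟩ := congrArg Prod.snd hcon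
        have hp1 : p.1 = ⟨i+1, hi⟩ := by
          apply s.injective; rw [h1, hsx0r]
        have hp2 : p.2 = ⟨i, pf0⟩ := by
          apply s.injective; rw [h2, hsx0l]
        rw [hp1, hp2] at hlt
        have : (i:ℕ) + 1 < i := hlt
        omega
      · simp only [hT', Finset.mem_filter, Finset.mem_univ, true_and]
        have hpne : (p.1, p.2) ≠ x0 := by
          intro hcon
          apply hx0T
          rw [← hcon]
          simp only [hT, Finset.mem_filter, Finset.mem_univ, true_and]
          exact ⟨hlt, hinv⟩
        refine ⟨key p.1 p.2 hlt hpne, ?_⟩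
        show u (s (s p.2)) < u (s (s p.1))
        rw [Equiv.swap_apply_self, Equiv.swap_apply_self]
        exact hinv
    · intro p _
      simp only [hs, Equiv.swap_apply_self]
    · intro p _
      simp only [hs, Equiv.swap_apply_self]
  have hfin : T'.card = (T'.erase x0).card + 1 := (Finset.card_erase_add_one hx0T').symm
  show T'.card = T.card + 1
  omega

lemma len_mul_swap' {n : ℕ} (i : ℕ) (hi : i + 1 < n) (pf0 : i < n) (u : Equiv.Perm (Fin n))
    (hu : u ⟨i+1, hi⟩ < u ⟨i, pf0⟩) :
    len n u = len n (u * Equiv.swap ⟨i, pf0⟩ ⟨i+1, hi⟩) + 1 := by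
  have h := len_mul_swap i hi pf0 (u * Equiv.swap ⟨i, pf0⟩ ⟨i+1, hi⟩) (by
    rw [Equiv.Perm.mul_apply, Equiv.Perm.mul_apply, Equiv.swap_apply_left, Equiv.swap_apply_right]
    exact hu)
  rw [mul_assoc, Equiv.swap_mul_self, mul_one] at h
  exact h

lemma len_one {n : ℕ} : len n 1 = 0 := by
  unfold len
  rw [Finset.card_eq_zero, Finset.filter_eq_empty_iff]
  rintro p -
  simp only [Equiv.Perm.one_apply]
  rintro ⟨h1, h2⟩
  exact absurd h1 (not_lt_of_gt h2)

lemma exists_descent {n : ℕ} (z : Equiv.Perm (Fin n)) (hz : z ≠ 1) :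
    ∃ (i : ℕ) (hi : i + 1 < n), z ⟨i+1, hi⟩ < z ⟨i, Nat.lt_of_succ_lt hi⟩ := by
  by_contra hcon
  push_neg at hcon
  apply hz
  have hmono : StrictMono ⇑z := by
    cases n with
    | zero => intro a; exact absurd a.isLt (by omega)
    | succ m =>
      apply Fin.strictMono_iff_lt_succ.mpr
      intro b
      have hb : (b:ℕ) + 1 < m + 1 := by omega
      have h := hcon (b:ℕ) hb
      have hcs : b.castSucc = (⟨(b:ℕ), Nat.lt_of_succ_lt hb⟩ : Fin (m+1)) := Fin.ext rfl
      have hsc : b.succ = (⟨(b:ℕ)+1, hb⟩ : Fin (m+1)) := Fin.ext rfl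
      rw [hcs, hsc]
      rcases lt_or_eq_of_le h with h' | h'
      · exact h'
      · exfalso
        have := z.injective h'
        have : ((⟨(b:ℕ), Nat.lt_of_succ_lt hb⟩ : Fin (m+1)) : ℕ)
            = ((⟨(b:ℕ)+1, hb⟩ : Fin (m+1)) : ℕ) := by rw [this]
        simp at this
  have hid : StrictMono (id : Fin n → Fin n) := strictMono_id
  have hz' : ⇑z = id := by
    have hr : Set.range ⇑z = Set.range (id : Fin n → Fin n) := by
      rw [Set.range_id, z.surjective.range_eq]
    have hwf : WellFoundedLT (Fin n) := inferInstance
    exact (@StrictMono.range_inj (Fin n) (Fin n) _ _ hwf _ _ hmono hid).1 hr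
  exact Equiv.ext fun a => congrFun hz' a

lemma len_zero_eq_one {n : ℕ} (z : Equiv.Perm (Fin n)) (hz : len n z = 0) : z = 1 := by
  by_contra hne
  obtain ⟨i, hi, hdesc⟩ := exists_descent z hne
  unfold len at hz
  rw [Finset.card_eq_zero, Finset.filter_eq_empty_iff] at hz
  exact hz (Finset.mem_univ (⟨⟨i, Nat.lt_of_succ_lt hi⟩, ⟨i+1, hi⟩⟩ : Fin n × Fin n))
    ⟨Fin.mk_lt_mk.mpr (by omega), hdesc⟩

end Stmt10Aux

namespace Stmt10Aux

open Module Submodule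

/-- The image of the open Richardson variety under the k-th projection. -/
def RS (n k : ℕ) (hkn : k < n + 1) (u w : Equiv.Perm (Fin n)) :
    Set (Submodule ℂ (Fin n → ℂ)) :=
  {V | ∃ G : Fin (n + 1) → Submodule ℂ (Fin n → ℂ), IsCompleteFlag n G ∧
    InOpenSchubertCell n u G ∧ InOpenOppSchubertCell n w G ∧ G ⟨k, hkn⟩ = V}

lemma main_induction (n k : ℕ) (hk : k ≤ n) :
    ∀ (N : ℕ) (z u w : Equiv.Perm (Fin n)), len n z ≤ N → InParabolic n k z →
      len n (u * z) = len n u + len n z → len n (w * z) = len n w + len n z →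
      RS n k (by omega) u w = RS n k (by omega) (u * z) (w * z) := by
  intro N
  induction N with
  | zero =>
    intro z u w hlen hpar h1 h2
    have hz1 : z = 1 := len_zero_eq_one z (by omega)
    subst hz1
    rw [mul_one, mul_one]
  | succ N ih =>
    intro z u w hlen hpar h1 h2
    by_cases hz1 : z = 1
    · subst hz1; rw [mul_one, mul_one]
    · obtain ⟨i, hi, hdesc⟩ := exists_descent z hz1
      have pf0 : i < n := Nat.lt_of_succ_lt hi
      set s : Equiv.Perm (Fin n) := Equiv.swap ⟨i, pf0⟩ ⟨i+1, hi⟩ with hs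
      set z' : Equiv.Perm (Fin n) := z * s with hz'
      have hzz : z' * s = z := by
        rw [hz', mul_assoc, hs, Equiv.swap_mul_self, mul_one]
      have hdescn : (z ⟨i+1, hi⟩ : ℕ) < (z ⟨i, pf0⟩ : ℕ) := hdesc
      have hlz : len n z = len n z' + 1 := len_mul_swap' i hi pf0 z hdesc
      -- boundary
      have hik : i + 1 ≠ k := by
        intro hcon
        have ha1 : (z ⟨i, pf0⟩ : ℕ) < k := (hpar ⟨i, pf0⟩).mp (show i < k by omega)
        have ha2 : ¬ (z ⟨i+1, hi⟩ : ℕ) < k := by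
          intro hh
          have : i + 1 < k := (hpar ⟨i+1, hi⟩).mpr hh
          omega
        omega
      have hside : ∀ m : Fin n, ((s m : Fin n) : ℕ) < k ↔ (m:ℕ) < k := by
        intro m
        have hv := swap_val i hi m
        rw [hs]
        rw [hv]
        split_ifs <;> omega
      have hpar' : InParabolic n k z' := by
        intro m
        exact Iff.trans (Iff.trans (hside m).symm (hpar (s m)))
          (Iff.of_eq (congrArg (fun t => ((t : Fin n):ℕ) < k) rfl))
      -- length additivity for z' and ascent of u*z' at i
      have hes : ∀ v : Equiv.Perm (Fin n), (v * z') * s = v * z := by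
        intro v
        rw [mul_assoc, hzz]
      have hval1 : ∀ v : Equiv.Perm (Fin n), (v * z') ⟨i, pf0⟩ = v (z ⟨i+1, hi⟩) := by
        intro v
        show v (z (s ⟨i, pf0⟩)) = v (z ⟨i+1, hi⟩)
        rw [hs, Equiv.swap_apply_left]
      have hval2 : ∀ v : Equiv.Perm (Fin n), (v * z') ⟨i+1, hi⟩ = v (z ⟨i, pf0⟩) := by
        intro v
        show v (z (s ⟨i+1, hi⟩)) = v (z ⟨i, pf0⟩)
        rw [hs, Equiv.swap_apply_right]
      have hkey : ∀ v : Equiv.Perm (Fin n), len n (v * z) = len n v + len n z →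
          len n (v * z') = len n v + len n z' ∧
            (v * z') ⟨i, pf0⟩ < (v * z') ⟨i+1, hi⟩ := by
        intro v hv
        rcases lt_or_gt_of_ne (show (v * z') ⟨i, pf0⟩ ≠ (v * z') ⟨i+1, hi⟩ by
          intro hcon
          have := (v * z').injective hcon
          have : (i : ℕ) = i + 1 := congrArg Fin.val this
          omega) with hx | hx
        · have hh := len_mul_swap i hi pf0 (v * z') hx
          rw [hes v] at hh
          exact ⟨by omega, hx⟩
        · exfalso
          have hh := len_mul_swap' i hi pf0 (v * z') hx
          rw [hes v] at hh
          have hsub := len_mul_le v z'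
          omega
      obtain ⟨h1', hux⟩ := hkey u h1
      obtain ⟨h2', hwx⟩ := hkey w h2
      have hsetIH := ih z' u w (by omega) hpar' h1' h2'
      rw [hsetIH]
      -- remaining: RS (u*z') (w*z') = RS (u*z) (w*z)
      apply Set.eq_of_subset_of_subset
      · rintro V ⟨G, hG, hcu, hcw, hVk⟩
        obtain ⟨G', hG', hcu', hcw', hk'⟩ :=
          stepAsc hk i hi hik (u * z') (w * z') pf0 hux hwx hG hcu hcw
        rw [hs] at hes
        refine ⟨G', hG', ?_, ?_, hk'.trans hVk⟩
        · rw [← hes u]; exact hcu'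
        · rw [← hes w]; exact hcw'
      · rintro V ⟨G, hG, hcu, hcw, hVk⟩
        have hdu : (u * z) ⟨i+1, hi⟩ < (u * z) ⟨i, pf0⟩ := by
          have e1 := hval1 u
          have e2 := hval2 u
          calc (u * z) ⟨i+1, hi⟩ = (u * z') ⟨i, pf0⟩ := by rw [e1]; rfl
            _ < (u * z') ⟨i+1, hi⟩ := hux
            _ = (u * z) ⟨i, pf0⟩ := by rw [e2]; rfl
        have hdw : (w * z) ⟨i+1, hi⟩ < (w * z) ⟨i, pf0⟩ := by
          have e1 := hval1 w
          have e2 := hval2 w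
          calc (w * z) ⟨i+1, hi⟩ = (w * z') ⟨i, pf0⟩ := by rw [e1]; rfl
            _ < (w * z') ⟨i+1, hi⟩ := hwx
            _ = (w * z) ⟨i, pf0⟩ := by rw [e2]; rfl
        obtain ⟨G', hG', hcu', hcw', hk'⟩ :=
          stepDesc hk i hi hik (u * z) (w * z) pf0 hdu hdw hG hcu hcw
        have hes' : ∀ v : Equiv.Perm (Fin n), (v * z) * s = v * z' := by
          intro v
          rw [mul_assoc, hz']
        rw [hs] at hes'
        refine ⟨G', hG', ?_, ?_, hk'.trans hVk⟩
        · rw [← hes' u]; exact hcu'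
        · rw [← hes' w]; exact hcw'

end Stmt10Aux

theorem stmt_10 (n k : ℕ) (hk : k ≤ n) (u w z : Equiv.Perm (Fin n))
    (hz : InParabolic n k z)
    (hadd₁ : len n (u * z) = len n u + len n z)
    (hadd₂ : len n (w * z) = len n w + len n z) :
    {V : Submodule ℂ (Fin n → ℂ) |
      ∃ G : Fin (n + 1) → Submodule ℂ (Fin n → ℂ), IsCompleteFlag n G ∧
        InOpenSchubertCell n u G ∧ InOpenOppSchubertCell n w G ∧
        G ⟨k, Nat.lt_succ_of_le hk⟩ = V} =
    {V : Submodule ℂ (Fin n → ℂ) |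
      ∃ G : Fin (n + 1) → Submodule ℂ (Fin n → ℂ), IsCompleteFlag n G ∧
        InOpenSchubertCell n (u * z) G ∧ InOpenOppSchubertCell n (w * z) G ∧
        G ⟨k, Nat.lt_succ_of_le hk⟩ = V} := by
  exact Stmt10Aux.main_induction n k hk (len n z) z u w le_rfl hz hadd₁ hadd₂
end

section
/- Let I, K ∈ binom([n],k) and let s ≥ 0 be an integer. Then dist(K, B(I)) ≤ s if and only if |I ∩ {1,…,r−1}| − |K ∩ {1,…,r−1}| ≤ s for every r ∈ {1,…,n+1}. -/
/-- The Gale order on k-element subsets of Fin n: I ≤ J iff, listing both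
increasingly, the r-th element of I is at most the r-th element of J. -/
def galeLE (n k : ℕ) (I J : Finset (Fin n)) : Prop :=
  ∃ (hI : I.card = k) (hJ : J.card = k),
    ∀ r : Fin k, ((I.orderIsoOfFin hI r : Fin n)) ≤ ((J.orderIsoOfFin hJ r : Fin n))

/-- dist(K,L) = k − |K ∩ L| for two k-element subsets. -/
def distKL {n : ℕ} (k : ℕ) (K L : Finset (Fin n)) : ℕ := k - (K ∩ L).card

/-- The distance from K to a set ℬ of k-element subsets:
min_{L ∈ ℬ} dist(K,L). -/
noncomputable def distToSet {n : ℕ} (k : ℕ) (K : Finset (Fin n))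
    (ℬ : Set (Finset (Fin n))) : ℕ :=
  sInf (distKL k K '' ℬ)


namespace Stmt17

variable {n : ℕ}

/-- counting function: number of elements of A with value < r -/
def cnt (A : Finset (Fin n)) (r : ℕ) : ℕ := (A.filter fun m : Fin n => (m : ℕ) < r).card

lemma cnt_zero (A : Finset (Fin n)) : cnt A 0 = 0 := by simp [cnt]

lemma cnt_le_card (A : Finset (Fin n)) (r : ℕ) : cnt A r ≤ A.card :=
  Finset.card_le_card (Finset.filter_subset _ _)

lemma cnt_subset {A B : Finset (Fin n)} (h : A ⊆ B) (r : ℕ) : cnt A r ≤ cnt B r :=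
  Finset.card_le_card (Finset.filter_subset_filter _ h)

lemma cnt_eq_card (A : Finset (Fin n)) {r : ℕ} (h : n ≤ r) : cnt A r = A.card := by
  unfold cnt
  rw [Finset.filter_true_of_mem]
  intro m _
  exact lt_of_lt_of_le m.isLt h

lemma cnt_succ (A : Finset (Fin n)) (p : ℕ) (hp : p < n) :
    cnt A (p + 1) = cnt A p + if (⟨p, hp⟩ : Fin n) ∈ A then 1 else 0 := by
  unfold cnt
  have hsplit : (A.filter fun m : Fin n => (m : ℕ) < p + 1)
      = (A.filter fun m : Fin n => (m : ℕ) < p) ∪ (A.filter fun m : Fin n => (m : ℕ) = p) := by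
    rw [← Finset.filter_or]
    apply Finset.filter_congr
    intro m _
    simp [Nat.lt_succ_iff_lt_or_eq, le_iff_lt_or_eq]
  have hdisj : Disjoint (A.filter fun m : Fin n => (m : ℕ) < p)
      (A.filter fun m : Fin n => (m : ℕ) = p) := by
    rw [Finset.disjoint_filter]
    intro x _ hx1 hx2
    omega
  rw [hsplit, Finset.card_union_of_disjoint hdisj]
  congr 1
  by_cases h : (⟨p, hp⟩ : Fin n) ∈ A
  · rw [if_pos h]
    have heq : (A.filter fun m : Fin n => (m : ℕ) = p) = {(⟨p, hp⟩ : Fin n)} := by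
      ext m
      simp only [Finset.mem_filter, Finset.mem_singleton, Fin.ext_iff]
      constructor
      · rintro ⟨_, h2⟩; exact h2
      · intro h2
        have : m = (⟨p, hp⟩ : Fin n) := Fin.ext h2
        subst this; exact ⟨h, rfl⟩
    rw [heq, Finset.card_singleton]
  · rw [if_neg h]
    have heq : (A.filter fun m : Fin n => (m : ℕ) = p) = ∅ := by
      ext m
      simp only [Finset.mem_filter, Finset.notMem_empty, iff_false, not_and]
      intro hm hval
      exact h (by have : m = (⟨p, hp⟩ : Fin n) := Fin.ext hval; rwa [← this])
    rw [heq, Finset.card_empty]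

lemma cnt_succ_le (A : Finset (Fin n)) (p : ℕ) : cnt A (p + 1) ≤ cnt A p + 1 := by
  by_cases hp : p < n
  · rw [cnt_succ A p hp]; split <;> omega
  · rw [cnt_eq_card A (by omega : n ≤ p + 1), cnt_eq_card A (by omega : n ≤ p)]; omega

lemma cnt_mono (A : Finset (Fin n)) {r r' : ℕ} (h : r ≤ r') : cnt A r ≤ cnt A r' := by
  apply Finset.card_le_card
  intro x hx
  simp only [Finset.mem_filter] at *
  exact ⟨hx.1, lt_of_lt_of_le hx.2 h⟩

lemma orderIso_lt_iff (A : Finset (Fin n)) (hA : A.card = k) (j : Fin k) (r : ℕ) :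
    ((A.orderIsoOfFin hA j : Fin n) : ℕ) < r ↔ (j : ℕ) < cnt A r := by
  constructor
  · intro hlt
    have : (Finset.Iic j).card ≤ (A.filter fun m : Fin n => (m : ℕ) < r).card := by
      apply Finset.card_le_card_of_injOn (fun j' => (A.orderIsoOfFin hA j' : Fin n))
      · intro j' hj'
        simp only [Finset.mem_coe, Finset.mem_Iic] at hj' ⊢
        refine Finset.mem_filter.mpr ⟨(A.orderIsoOfFin hA j').2, ?_⟩
        have : (A.orderIsoOfFin hA j' : Fin n) ≤ (A.orderIsoOfFin hA j : Fin n) := by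
          exact_mod_cast (A.orderIsoOfFin hA).monotone hj'
        exact lt_of_le_of_lt this hlt
      · intro a _ b _ hab
        have := (A.orderIsoOfFin hA).injective (Subtype.ext hab)
        exact this
    rw [Fin.card_Iic] at this
    exact lt_of_lt_of_le (Nat.lt_succ_self _) this
  · intro hlt
    by_contra hge
    push_neg at hge
    have : cnt A r ≤ (Finset.Iio j).card := by
      apply Finset.card_le_card_of_injOn
        (fun a => if ha : a ∈ A then (A.orderIsoOfFin hA).symm ⟨a, ha⟩ else j)
      · intro a ha
        rw [Finset.mem_coe, Finset.mem_filter] at ha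
        dsimp only; rw [dif_pos ha.1, Finset.mem_coe, Finset.mem_Iio]
        by_contra hge2
        push_neg at hge2
        have : (A.orderIsoOfFin hA j : Fin n) ≤ a := by
          have := (A.orderIsoOfFin hA).monotone hge2
          rw [OrderIso.apply_symm_apply] at this; exact this
        have : r ≤ (a : ℕ) := le_trans hge (by exact_mod_cast this)
        omega
      · intro a ha b hb hab
        rw [Finset.mem_coe, Finset.mem_filter] at ha hb
        dsimp only at hab
        rw [dif_pos ha.1, dif_pos hb.1] at hab
        have := (A.orderIsoOfFin hA).symm.injective hab
        exact congrArg Subtype.val this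
    rw [Fin.card_Iio] at this
    omega

lemma gale_iff_cnt (I L : Finset (Fin n)) (hI : I.card = k) :
    galeLE n k L I ↔ L.card = k ∧ ∀ r : ℕ, cnt I r ≤ cnt L r := by
  constructor
  · rintro ⟨hL, hI', hle⟩
    refine ⟨hL, fun r => ?_⟩
    rcases Nat.eq_zero_or_pos (cnt I r) with h0 | h0
    · omega
    have hler : cnt I r ≤ k := hI ▸ cnt_le_card I r
    set j : Fin k := ⟨cnt I r - 1, by omega⟩ with hj
    have h1 : ((I.orderIsoOfFin hI' j : Fin n) : ℕ) < r := by
      rw [orderIso_lt_iff I hI' j r]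
      simp only [hj]
      omega
    have h2 : ((L.orderIsoOfFin hL j : Fin n) : ℕ) < r :=
      lt_of_le_of_lt (by exact_mod_cast hle j) h1
    rw [orderIso_lt_iff L hL j r] at h2
    simp only [hj] at h2
    omega
  · rintro ⟨hL, hle⟩
    refine ⟨hL, hI, fun j => ?_⟩
    set r := ((I.orderIsoOfFin hI j : Fin n) : ℕ) + 1 with hr
    have h1 : (j : ℕ) < cnt I r := by
      rw [← orderIso_lt_iff I hI j r]; omega
    have h2 : (j : ℕ) < cnt L r := lt_of_lt_of_le h1 (hle r)
    rw [← orderIso_lt_iff L hL j r] at h2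
    exact Fin.le_def.mpr (by omega)

variable {n k : ℕ}

lemma mem_image_val {A : Finset (Fin n)} {p : ℕ} :
    p ∈ A.image Fin.val ↔ ∃ hp : p < n, (⟨p, hp⟩ : Fin n) ∈ A := by
  simp only [Finset.mem_image]
  constructor
  · rintro ⟨m, hm, rfl⟩
    exact ⟨m.isLt, by simpa using hm⟩
  · rintro ⟨hp, hm⟩
    exact ⟨⟨p, hp⟩, hm, rfl⟩

lemma cnt_succ_mem {A : Finset (Fin n)} {p : ℕ} (h : p ∈ A.image Fin.val) :
    cnt A (p + 1) = cnt A p + 1 := by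
  obtain ⟨hp, hm⟩ := mem_image_val.mp h
  rw [cnt_succ A p hp, if_pos hm]

lemma cnt_succ_not_mem {A : Finset (Fin n)} {p : ℕ} (h : p ∉ A.image Fin.val) :
    cnt A (p + 1) = cnt A p := by
  by_cases hp : p < n
  · rw [cnt_succ A p hp, if_neg, Nat.add_zero]
    intro hm
    exact h (mem_image_val.mpr ⟨hp, hm⟩)
  · rw [cnt_eq_card A (by omega), cnt_eq_card A (by omega)]

/-- the greedy counting function for the optimal L -/
def gC (k : ℕ) (I K : Finset (Fin n)) : ℕ → ℕ
  | 0 => 0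
  | p + 1 => gC k I K p +
      (if gC k I K p < cnt I (p + 1) ∨ (p ∈ K.image Fin.val ∧ gC k I K p < k) then 1 else 0)

variable {I K : Finset (Fin n)}

lemma gC_I (p : ℕ) : cnt I p ≤ gC k I K p := by
  induction p with
  | zero => simp [cnt_zero, gC]
  | succ p ih =>
    have hle := cnt_succ_le I p
    rw [gC]
    split
    · omega
    · rename_i hcond
      push_neg at hcond
      omega

lemma gC_le_k (hI : I.card = k) (p : ℕ) : gC k I K p ≤ k := by
  induction p with
  | zero => simp [gC]
  | succ p ih =>
    rw [gC]
    split
    · rename_i hcond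
      rcases hcond with h | h
      · have : cnt I (p + 1) ≤ k := hI ▸ cnt_le_card I (p + 1)
        omega
      · omega
    · omega

lemma gC_K (hI : I.card = k) (hK : K.card = k) (p : ℕ) : cnt K p ≤ gC k I K p := by
  induction p with
  | zero => simp [cnt_zero, gC]
  | succ p ih =>
    by_cases hm : p ∈ K.image Fin.val
    · have heq := cnt_succ_mem hm
      have h1 : gC k I K p ≤ k := gC_le_k hI p
      have h2 : cnt K (p + 1) ≤ k := le_of_le_of_eq (cnt_le_card K (p + 1)) hK
      rw [gC]
      split
      · omega
      · rename_i hcond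
        push_neg at hcond
        have h3 := hcond.2 hm
        omega
    · rw [cnt_succ_not_mem hm, gC]
      split <;> omega

lemma gC_stable (hI : I.card = k) {p : ℕ} (hp : n ≤ p) : gC k I K (p + 1) = gC k I K p := by
  rw [gC, if_neg, Nat.add_zero]
  push_neg
  constructor
  · have h1 : cnt I (p + 1) = k := by rw [cnt_eq_card I (by omega), hI]
    have h2 : cnt I p = k := by rw [cnt_eq_card I hp, hI]
    have := gC_I (k := k) (I := I) (K := K) p
    omega
  · intro hm
    obtain ⟨hp', _⟩ := mem_image_val.mp hm
    omega

/-- the optimal L -/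
def optL (k : ℕ) (I K : Finset (Fin n)) : Finset (Fin n) :=
  Finset.univ.filter fun m : Fin n => gC k I K ((m : ℕ) + 1) = gC k I K (m : ℕ) + 1

lemma mem_optL {m : Fin n} :
    m ∈ optL k I K ↔ gC k I K ((m : ℕ) + 1) = gC k I K (m : ℕ) + 1 := by
  simp [optL]

lemma cnt_optL {p : ℕ} (hp : p ≤ n) : cnt (optL k I K) p = gC k I K p := by
  induction p with
  | zero => simp [cnt_zero, gC]
  | succ p ih =>
    have hpn : p < n := by omega
    have hgc : gC k I K (p + 1) = gC k I K p +
        (if gC k I K p < cnt I (p + 1) ∨ (p ∈ K.image Fin.val ∧ gC k I K p < k)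
          then 1 else 0) := by rw [gC]
    by_cases hC : gC k I K p < cnt I (p + 1) ∨ (p ∈ K.image Fin.val ∧ gC k I K p < k)
    · rw [if_pos hC] at hgc
      have hmem : (⟨p, hpn⟩ : Fin n) ∈ optL k I K := mem_optL.mpr hgc
      rw [cnt_succ _ p hpn, ih (by omega), if_pos hmem, hgc]
    · rw [if_neg hC] at hgc
      have hmem : (⟨p, hpn⟩ : Fin n) ∉ optL k I K := by
        rw [mem_optL]
        simp only [Fin.val_mk]
        omega
      rw [cnt_succ _ p hpn, ih (by omega), if_neg hmem, hgc]

lemma card_optL (hI : I.card = k) : (optL k I K).card = k := by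
  have h1 : cnt (optL k I K) n = gC k I K n := cnt_optL le_rfl
  have h2 : cnt (optL k I K) n = (optL k I K).card := cnt_eq_card _ le_rfl
  have h3 : cnt I n ≤ gC k I K n := gC_I n
  have h4 : cnt I n = k := by rw [cnt_eq_card I le_rfl, hI]
  have h5 : gC k I K n ≤ k := gC_le_k hI n
  omega

lemma cnt_optL_ge (hI : I.card = k) (r : ℕ) : cnt I r ≤ cnt (optL k I K) r := by
  by_cases hr : r ≤ n
  · rw [cnt_optL hr]; exact gC_I r
  · push_neg at hr
    rw [cnt_eq_card I (by omega), cnt_eq_card _ (by omega : n ≤ r), hI, card_optL hI]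

/-- invariant: number of up-steps not in K stays ≤ s -/
lemma optL_invariant (hI : I.card = k) (hK : K.card = k) {s : ℕ}
    (hs : ∀ r : ℕ, cnt I r ≤ cnt K r + s) (p : ℕ) :
    cnt (optL k I K \ K) p ≤ s ∧
      (gC k I K p < k → cnt (optL k I K \ K) p + cnt K p ≤ gC k I K p) := by
  induction p with
  | zero => simp [cnt_zero, gC]
  | succ p ih =>
    by_cases hpn : p < n
    · by_cases hC : gC k I K p < cnt I (p + 1) ∨ (p ∈ K.image Fin.val ∧ gC k I K p < k)
      · have hstep : gC k I K (p + 1) = gC k I K p + 1 := by rw [gC, if_pos hC]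
        have hmemL : (⟨p, hpn⟩ : Fin n) ∈ optL k I K := mem_optL.mpr hstep
        by_cases hmK : (⟨p, hpn⟩ : Fin n) ∈ K
        · have hnot : (⟨p, hpn⟩ : Fin n) ∉ optL k I K \ K := by
            simp [Finset.mem_sdiff, hmK]
          rw [cnt_succ _ p hpn, if_neg hnot, Nat.add_zero]
          have hKs : cnt K (p + 1) = cnt K p + 1 := by
            rw [cnt_succ K p hpn, if_pos hmK]
          refine ⟨ih.1, fun hlt => ?_⟩
          have := ih.2 (by omega)
          omega
        · have hmem : (⟨p, hpn⟩ : Fin n) ∈ optL k I K \ K :=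
            Finset.mem_sdiff.mpr ⟨hmemL, hmK⟩
          rw [cnt_succ _ p hpn, if_pos hmem]
          have hnK : p ∉ K.image Fin.val := by
            intro h
            obtain ⟨hp', hm⟩ := mem_image_val.mp h
            exact hmK hm
          have hforced : gC k I K p < cnt I (p + 1) := by
            rcases hC with h | ⟨h, _⟩
            · exact h
            · exact absurd h hnK
          have hKs : cnt K (p + 1) = cnt K p := cnt_succ_not_mem hnK
          have hlt : gC k I K p < k := lt_of_lt_of_le hforced (hI ▸ cnt_le_card I (p + 1))
          have hih := ih.2 hlt
          have hsr := hs (p + 1)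
          constructor
          · omega
          · intro _
            omega
      · have hstep : gC k I K (p + 1) = gC k I K p := by rw [gC, if_neg hC, Nat.add_zero]
        have hnotL : (⟨p, hpn⟩ : Fin n) ∉ optL k I K := by
          rw [mem_optL]
          simp only
          omega
        have hnot : (⟨p, hpn⟩ : Fin n) ∉ optL k I K \ K := by
          simp [Finset.mem_sdiff, hnotL]
        rw [cnt_succ _ p hpn, if_neg hnot, Nat.add_zero]
        refine ⟨ih.1, fun hlt => ?_⟩
        have hlt' : gC k I K p < k := by omega
        push_neg at hC
        have hnK : p ∉ K.image Fin.val := fun h => absurd hlt' (by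
          have := hC.2 h
          omega)
        have hKs : cnt K (p + 1) = cnt K p := cnt_succ_not_mem hnK
        have := ih.2 hlt'
        omega
    · push_neg at hpn
      have h1 : cnt (optL k I K \ K) (p + 1) = cnt (optL k I K \ K) p := by
        rw [cnt_eq_card _ (by omega), cnt_eq_card _ (by omega : n ≤ p)]
      have h2 : cnt K (p + 1) = cnt K p := by
        rw [cnt_eq_card _ (by omega), cnt_eq_card _ (by omega : n ≤ p)]
      have h3 := gC_stable (K := K) hI hpn
      rw [h1, h2, h3]
      exact ih

lemma optL_card_sdiff (hI : I.card = k) (hK : K.card = k) {s : ℕ}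
    (hs : ∀ r : ℕ, cnt I r ≤ cnt K r + s) : (optL k I K \ K).card ≤ s := by
  have h1 : cnt (optL k I K \ K) n ≤ s := (optL_invariant hI hK hs n).1
  rwa [cnt_eq_card _ le_rfl] at h1

lemma optL_dist (hI : I.card = k) (hK : K.card = k) {s : ℕ}
    (hs : ∀ r : ℕ, cnt I r ≤ cnt K r + s) : distKL k K (optL k I K) ≤ s := by
  have h1 : (optL k I K \ K).card ≤ s := optL_card_sdiff hI hK hs
  have h2 : (optL k I K ∩ K).card + (optL k I K \ K).card = k := by
    rw [Finset.card_inter_add_card_sdiff, card_optL hI]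
  have h3 : (K ∩ optL k I K).card = (optL k I K ∩ K).card := by rw [Finset.inter_comm]
  unfold distKL
  omega

lemma cnt_le_inter_add {L : Finset (Fin n)} (K : Finset (Fin n)) (r : ℕ) :
    cnt L r ≤ cnt (L ∩ K) r + (L \ K).card := by
  have hsub : (L.filter fun m : Fin n => (m : ℕ) < r)
      ⊆ ((L ∩ K).filter fun m : Fin n => (m : ℕ) < r) ∪ (L \ K) := by
    intro x hx
    rw [Finset.mem_filter] at hx
    rw [Finset.mem_union]
    by_cases hxK : x ∈ K
    · exact Or.inl (Finset.mem_filter.mpr ⟨Finset.mem_inter.mpr ⟨hx.1, hxK⟩, hx.2⟩)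
    · exact Or.inr (Finset.mem_sdiff.mpr ⟨hx.1, hxK⟩)
  calc cnt L r ≤ (((L ∩ K).filter fun m : Fin n => (m : ℕ) < r) ∪ (L \ K)).card :=
        Finset.card_le_card hsub
    _ ≤ cnt (L ∩ K) r + (L \ K).card := Finset.card_union_le _ _

end Stmt17

theorem stmt_17 (n k : ℕ) (hk : k ≤ n) (s : ℕ)
    (I K : Finset (Fin n)) (hI : I.card = k) (hK : K.card = k) :
    distToSet k K {L : Finset (Fin n) | galeLE n k L I} ≤ s ↔
    ∀ r : ℕ, r ≤ n →
      ((I.filter fun m : Fin n => (m : ℕ) < r).card : ℤ) -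
        ((K.filter fun m : Fin n => (m : ℕ) < r).card : ℤ) ≤ (s : ℤ) := by
  open Stmt17 in
  constructor
  · intro h r _
    have hne : (distKL k K '' {L : Finset (Fin n) | galeLE n k L I}).Nonempty :=
      ⟨distKL k K I, ⟨I, ⟨hI, hI, fun j => le_refl _⟩, rfl⟩⟩
    obtain ⟨L, hL, hdist⟩ := Nat.sInf_mem hne
    obtain ⟨hLcard, hcnt⟩ := (gale_iff_cnt I L hI).mp hL
    have hd : distKL k K L ≤ s := by
      rw [hdist]; exact h
    have hfb : cnt I r ≤ cnt K r + (L \ K).card := by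
      calc cnt I r ≤ cnt L r := hcnt r
        _ ≤ cnt (L ∩ K) r + (L \ K).card := cnt_le_inter_add K r
        _ ≤ cnt K r + (L \ K).card := by
            exact Nat.add_le_add_right (cnt_subset (Finset.inter_subset_right) r) _
    have hsd : (L ∩ K).card + (L \ K).card = k := by
      rw [Finset.card_inter_add_card_sdiff, hLcard]
    have hKL : (K ∩ L).card = (L ∩ K).card := by rw [Finset.inter_comm]
    unfold distKL at hd
    show (cnt I r : ℤ) - (cnt K r : ℤ) ≤ (s : ℤ)
    omega
  · intro h
    have hs : ∀ r : ℕ, cnt I r ≤ cnt K r + s := by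
      intro r
      by_cases hr : r ≤ n
      · have h1 := h r hr
        have h2 : ((cnt I r : ℤ)) - (cnt K r : ℤ) ≤ (s : ℤ) := h1
        omega
      · push_neg at hr
        have h1 : cnt I r = k := by rw [cnt_eq_card I (le_of_lt hr), hI]
        have h2 : cnt K r = k := by rw [cnt_eq_card K (le_of_lt hr), hK]
        omega
    have hgale : galeLE n k (optL k I K) I :=
      (gale_iff_cnt I (optL k I K) hI).mpr ⟨card_optL hI, cnt_optL_ge hI⟩
    have hdist : distKL k K (optL k I K) ≤ s := optL_dist hI hK hs
    have hmem : distKL k K (optL k I K) ∈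
        distKL k K '' {L : Finset (Fin n) | galeLE n k L I} := ⟨optL k I K, hgale, rfl⟩
    exact le_trans (Nat.sInf_le hmem) hdist
end

section
/- Let I, J, K ∈ binom([n],k) and let d ≥ 0 be an integer. Then K ∈ T(I,J,d) if and only if I[1,r) − K[1,r) + K[1,s) − J[1,s) ≤ d for all integers 1 ≤ r, s ≤ n+1, where X[1,r) denotes |X ∩ {1,…,r−1}|. -/
namespace Stmt18

def cnt {n : ℕ} (X : Finset (Fin n)) (r : ℕ) : ℕ :=
  (X.filter fun m : Fin n => (m : ℕ) < r).card

variable {n k : ℕ}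





lemma cnt_zero (X : Finset (Fin n)) : cnt X 0 = 0 := by simp [cnt]

lemma cnt_of_ge {X : Finset (Fin n)} {r : ℕ} (h : n ≤ r) : cnt X r = X.card := by
  unfold cnt
  rw [Finset.filter_true_of_mem]
  intro x _
  exact lt_of_lt_of_le x.isLt h

lemma cnt_le_card (X : Finset (Fin n)) (r : ℕ) : cnt X r ≤ X.card :=
  Finset.card_filter_le _ _

lemma cnt_mono (X : Finset (Fin n)) {r s : ℕ} (h : r ≤ s) : cnt X r ≤ cnt X s := by
  apply Finset.card_le_card
  intro x hx
  simp only [Finset.mem_filter] at hx ⊢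
  exact ⟨hx.1, by omega⟩

lemma cnt_succ_eq (X : Finset (Fin n)) {r : ℕ} (hr : r < n) :
    cnt X (r + 1) = cnt X r + (if (⟨r, hr⟩ : Fin n) ∈ X then 1 else 0) := by
  unfold cnt
  have hfil : (X.filter fun m : Fin n => (m : ℕ) < r + 1) =
      (X.filter fun m : Fin n => (m : ℕ) < r) ∪ (X.filter fun m : Fin n => m = ⟨r, hr⟩) := by
    rw [← Finset.filter_or]
    apply Finset.filter_congr
    intro x _
    constructor
    · intro hx
      rcases Nat.lt_or_ge (x : ℕ) r with h | h
      · exact Or.inl h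
      · exact Or.inr (Fin.ext (by simp only [Fin.val_mk]; omega))
    · rintro (hx | rfl)
      · omega
      · simp
  rw [hfil, Finset.card_union_of_disjoint, Finset.filter_eq']
  · split <;> simp
  · rw [Finset.disjoint_filter]
    rintro x _ hx rfl
    simp only [Fin.val_mk] at hx
    omega

lemma exists_mem_ge_of_cnt_lt {X : Finset (Fin n)} {a b : ℕ} (h : cnt X a < cnt X b) :
    ∃ x ∈ X, a ≤ (x : ℕ) ∧ (x : ℕ) < b := by
  by_contra hcon
  push_neg at hcon
  have : (X.filter fun m : Fin n => (m : ℕ) < b) ⊆ (X.filter fun m : Fin n => (m : ℕ) < a) := by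
    intro x hx
    simp only [Finset.mem_filter] at hx ⊢
    refine ⟨hx.1, ?_⟩
    by_contra hxa
    exact absurd (hcon x hx.1 (by omega)) (by omega)
  exact absurd (Finset.card_le_card this) (by unfold cnt at h; omega)

lemma cnt_insert {X : Finset (Fin n)} {p : Fin n} (hp : p ∉ X) (r : ℕ) :
    cnt (insert p X) r = cnt X r + (if (p : ℕ) < r then 1 else 0) := by
  unfold cnt
  rw [Finset.filter_insert]
  split
  · rw [Finset.card_insert_of_notMem (fun hc => hp (Finset.mem_of_mem_filter _ hc))]
  · simp

lemma cnt_erase {X : Finset (Fin n)} {q : Fin n} (hq : q ∈ X) (r : ℕ) :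
    cnt (X.erase q) r = cnt X r - (if (q : ℕ) < r then 1 else 0) := by
  unfold cnt
  rw [Finset.filter_erase]
  by_cases h : (q : ℕ) < r
  · rw [Finset.card_erase_of_mem (Finset.mem_filter.mpr ⟨hq, h⟩)]
    simp [h]
  · have hq' : q ∉ X.filter fun m : Fin n => (m : ℕ) < r := by
      simp only [Finset.mem_filter]
      tauto
    rw [Finset.erase_eq_of_notMem hq']
    simp [h]

lemma downclosed_mem_iff {S : Finset (Fin k)}
    (hS : ∀ t t' : Fin k, t' ≤ t → t ∈ S → t' ∈ S) (t : Fin k) :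
    t ∈ S ↔ (t : ℕ) < S.card := by
  constructor
  · intro ht
    have hsub : Finset.Iic t ⊆ S := fun t' ht' => hS t t' (Finset.mem_Iic.mp ht') ht
    have := Finset.card_le_card hsub
    rw [Fin.card_Iic] at this
    omega
  · intro ht
    by_contra hmem
    have hsub : S ⊆ Finset.Iio t := by
      intro t' ht'
      rw [Finset.mem_Iio]
      rcases lt_or_ge t' t with h | h
      · exact h
      · exact absurd (hS t' t h ht') hmem
    have := Finset.card_le_card hsub
    rw [Fin.card_Iio] at this
    omega

lemma cnt_eq_card_fin (I : Finset (Fin n)) (hI : I.card = k) (r : ℕ) :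
    cnt I r =
      (Finset.univ.filter fun t : Fin k => ((I.orderEmbOfFin hI t : Fin n) : ℕ) < r).card := by
  symm
  apply Finset.card_bij (fun t _ => I.orderEmbOfFin hI t)
  · intro t ht
    simp only [Finset.mem_filter, Finset.mem_univ, true_and] at ht
    exact Finset.mem_filter.mpr ⟨Finset.orderEmbOfFin_mem I hI t, ht⟩
  · intro a ha b hb hab
    exact (I.orderEmbOfFin hI).injective hab
  · intro x hx
    rw [Finset.mem_filter] at hx
    have hx' : x ∈ Set.range (I.orderEmbOfFin hI) := by
      rw [Finset.range_orderEmbOfFin]; exact hx.1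
    obtain ⟨t, ht⟩ := hx'
    refine ⟨t, ?_, ht⟩
    simp only [Finset.mem_filter, Finset.mem_univ, true_and, ht]
    exact hx.2

lemma gale_iff {L I : Finset (Fin n)} (hL : L.card = k) (hI : I.card = k) :
    galeLE n k L I ↔ ∀ r : ℕ, cnt I r ≤ cnt L r := by
  constructor
  · rintro ⟨hL', hI', hfor⟩ r
    rw [cnt_eq_card_fin I hI', cnt_eq_card_fin L hL']
    apply Finset.card_le_card
    intro t ht
    simp only [Finset.mem_filter, Finset.mem_univ, true_and] at ht ⊢
    have h1 := hfor t
    rw [Fin.le_def] at h1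
    rw [Finset.coe_orderIsoOfFin_apply, Finset.coe_orderIsoOfFin_apply] at h1
    omega
  · intro h
    refine ⟨hL, hI, fun t => ?_⟩
    rw [Fin.le_def, Finset.coe_orderIsoOfFin_apply, Finset.coe_orderIsoOfFin_apply]
    set r : ℕ := (I.orderEmbOfFin hI t : ℕ) + 1 with hr
    have hdcI : ∀ a a' : Fin k, a' ≤ a →
        a ∈ (Finset.univ.filter fun u : Fin k => ((I.orderEmbOfFin hI u : Fin n) : ℕ) < r) →
        a' ∈ (Finset.univ.filter fun u : Fin k => ((I.orderEmbOfFin hI u : Fin n) : ℕ) < r) := by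
      intro a a' haa ha
      simp only [Finset.mem_filter, Finset.mem_univ, true_and] at ha ⊢
      have := (I.orderEmbOfFin hI).monotone haa
      rw [Fin.le_def] at this
      omega
    have hdcL : ∀ a a' : Fin k, a' ≤ a →
        a ∈ (Finset.univ.filter fun u : Fin k => ((L.orderEmbOfFin hL u : Fin n) : ℕ) < r) →
        a' ∈ (Finset.univ.filter fun u : Fin k => ((L.orderEmbOfFin hL u : Fin n) : ℕ) < r) := by
      intro a a' haa ha
      simp only [Finset.mem_filter, Finset.mem_univ, true_and] at ha ⊢
      have := (L.orderEmbOfFin hL).monotone haa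
      rw [Fin.le_def] at this
      omega
    have htI : t ∈ (Finset.univ.filter fun u : Fin k => ((I.orderEmbOfFin hI u : Fin n) : ℕ) < r) := by
      simp only [Finset.mem_filter, Finset.mem_univ, true_and]
      omega
    rw [downclosed_mem_iff hdcI] at htI
    rw [← cnt_eq_card_fin I hI] at htI
    have h2 : (t : ℕ) < cnt L r := lt_of_lt_of_le htI (h r)
    rw [cnt_eq_card_fin L hL, ← downclosed_mem_iff hdcL] at h2
    simp only [Finset.mem_filter, Finset.mem_univ, true_and] at h2
    omega

lemma exists_le (I : Finset (Fin n)) (hI : I.card = k) (m : ℕ) :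
    ∀ K : Finset (Fin n), K.card = k → (∀ r : ℕ, cnt I r ≤ cnt K r + m) →
    ∃ L : Finset (Fin n), L.card = k ∧ (∀ r : ℕ, cnt I r ≤ cnt L r) ∧
      k ≤ (K ∩ L).card + m := by
  induction m with
  | zero =>
    intro K hK h
    exact ⟨K, hK, fun r => by have := h r; omega, by simp [Finset.inter_self, hK]⟩
  | succ m ih =>
    intro K hK h
    by_cases hall : ∀ r : ℕ, cnt I r ≤ cnt K r + m
    · obtain ⟨L, hL1, hL2, hL3⟩ := ih K hK hall
      exact ⟨L, hL1, hL2, by omega⟩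
    push_neg at hall
    have hex : ∃ r : ℕ, cnt K r + m < cnt I r := by
      obtain ⟨r, hr⟩ := hall; exact ⟨r, by omega⟩
    classical
    set r0 := Nat.find hex with hr0def
    have hPr0 : cnt K r0 + m < cnt I r0 := Nat.find_spec hex
    have hmin : ∀ r < r0, ¬(cnt K r + m < cnt I r) := fun r hr => Nat.find_min hex hr
    have hr0n : r0 < n := by
      by_contra hge
      push_neg at hge
      rw [cnt_of_ge hge, cnt_of_ge hge, hI, hK] at hPr0
      omega
    have hr0pos : 1 ≤ r0 := by
      rcases Nat.eq_zero_or_pos r0 with h0 | h0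
      · rw [h0, cnt_zero, cnt_zero] at hPr0; omega
      · exact h0
    -- the element p = r0 - 1
    have hr1lt : r0 - 1 < n := by omega
    set p : Fin n := ⟨r0 - 1, hr1lt⟩ with hpdef
    have hstep : r0 = (r0 - 1) + 1 := by omega
    have hIstep : cnt I r0 = cnt I (r0 - 1) + (if p ∈ I then 1 else 0) := by
      rw [hstep]; exact cnt_succ_eq I hr1lt
    have hKstep : cnt K r0 = cnt K (r0 - 1) + (if p ∈ K then 1 else 0) := by
      rw [hstep]; exact cnt_succ_eq K hr1lt
    have hprev : ¬(cnt K (r0 - 1) + m < cnt I (r0 - 1)) := hmin _ (by omega)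
    have hpK : p ∉ K := by
      intro hpK
      simp only [hpK, if_pos] at hKstep
      have hIle : cnt I r0 ≤ cnt I (r0 - 1) + 1 := by
        rw [hIstep]; split <;> omega
      omega
    -- r1 : greatest r ≤ n with violation
    set P : ℕ → Prop := fun r => cnt K r + m < cnt I r with hPdef
    set r1 := Nat.findGreatest P n with hr1def
    have hPr1 : P r1 := Nat.findGreatest_spec (le_of_lt hr0n) hPr0
    have hr1n : r1 ≤ n := Nat.findGreatest_le n
    have hr0r1 : r0 ≤ r1 := by
      by_contra hcon
      push_neg at hcon
      exact (Nat.findGreatest_is_greatest hcon (le_of_lt hr0n)) hPr0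
    have hmax : ∀ r : ℕ, r1 < r → ¬ P r := by
      intro r hr
      rcases le_or_gt r n with hrn | hrn
      · exact Nat.findGreatest_is_greatest hr hrn
      · show ¬ (cnt K r + m < cnt I r)
        rw [cnt_of_ge (le_of_lt hrn), cnt_of_ge (le_of_lt hrn), hI, hK]
        omega
    -- the element q ≥ r1 in K
    have hKr1 : cnt K r1 < cnt K n := by
      have h1 : cnt I r1 ≤ k := by rw [← hI]; exact cnt_le_card I r1
      have h2 : cnt K n = k := by rw [cnt_of_ge (le_refl n), hK]
      have hPr1' : cnt K r1 + m < cnt I r1 := hPr1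
      omega
    obtain ⟨q, hqK, hqge, hqlt⟩ := exists_mem_ge_of_cnt_lt hKr1
    have hpq : (p : ℕ) < (q : ℕ) := by
      simp only [hpdef]
      omega
    -- build K'
    set K' : Finset (Fin n) := insert p (K.erase q) with hK'def
    have hpKe : p ∉ K.erase q := fun hc => hpK (Finset.mem_of_mem_erase hc)
    have hK' : K'.card = k := by
      rw [hK'def, Finset.card_insert_of_notMem hpKe, Finset.card_erase_of_mem hqK, hK]
      have : 1 ≤ k := by
        rw [← hK]; exact Finset.card_pos.mpr ⟨q, hqK⟩
      omega
    have hcntK' : ∀ r : ℕ, cnt K' r =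
        cnt K r - (if (q : ℕ) < r then 1 else 0) + (if (p : ℕ) < r then 1 else 0) := by
      intro r
      rw [hK'def, cnt_insert hpKe, cnt_erase hqK]
    have hqcnt : ∀ r : ℕ, (q : ℕ) < r → 1 ≤ cnt K r := by
      intro r hr
      apply Finset.card_pos.mpr
      exact ⟨q, Finset.mem_filter.mpr ⟨hqK, hr⟩⟩
    have h' : ∀ r : ℕ, cnt I r ≤ cnt K' r + m := by
      intro r
      rw [hcntK' r]
      rcases le_or_gt r (r0 - 1) with hc1 | hc1
      · -- r ≤ p : no change, minimality
        have hnot := hmin r (by omega)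
        have hq' : ¬ ((q : ℕ) < r) := by omega
        have hp' : ¬ ((p : ℕ) < r) := by simp only [hpdef]; omega
        simp only [hq', hp', if_neg, not_false_iff]
        omega
      rcases le_or_gt r (q : ℕ) with hc2 | hc2
      · -- p < r ≤ q : gain one
        have hq' : ¬ ((q : ℕ) < r) := by omega
        have hp' : (p : ℕ) < r := by simp only [hpdef]; omega
        simp only [hq', hp', if_neg, if_pos, not_false_iff]
        have := h r
        omega
      · -- q < r : maximality
        have hnot : ¬ (cnt K r + m < cnt I r) := hmax r (by omega)
        have hp' : (p : ℕ) < r := by omega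
        have h1 := hqcnt r hc2
        simp only [hc2, hp', if_pos]
        omega
    obtain ⟨L, hL1, hL2, hL3⟩ := ih K' hK' h'
    refine ⟨L, hL1, hL2, ?_⟩
    have hsub : K' ∩ L ⊆ insert p (K ∩ L) := by
      intro x hx
      rw [Finset.mem_inter] at hx
      rw [hK'def] at hx
      rcases Finset.mem_insert.mp hx.1 with hxp | hxK
      · exact Finset.mem_insert.mpr (Or.inl hxp)
      · exact Finset.mem_insert.mpr
          (Or.inr (Finset.mem_inter.mpr ⟨Finset.mem_of_mem_erase hxK, hx.2⟩))
    have hcard := Finset.card_le_card hsub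
    have := Finset.card_insert_le p (K ∩ L)
    omega

lemma inter_card_lower {K L : Finset (Fin n)} (hK : K.card = k) (hL : L.card = k) (r : ℕ) :
    cnt L r ≤ cnt K r + (k - (K ∩ L).card) := by
  classical
  have h1 : (K ∩ L) ⊆ (K ∩ L.filter (fun m : Fin n => (m : ℕ) < r)) ∪
      (L \ L.filter (fun m : Fin n => (m : ℕ) < r)) := by
    intro x hx
    rw [Finset.mem_inter] at hx
    by_cases hxr : (x : ℕ) < r
    · exact Finset.mem_union_left _
        (Finset.mem_inter.mpr ⟨hx.1, Finset.mem_filter.mpr ⟨hx.2, hxr⟩⟩)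
    · exact Finset.mem_union_right _
        (Finset.mem_sdiff.mpr ⟨hx.2, fun hc => hxr (Finset.mem_filter.mp hc).2⟩)
  have h2 := le_trans (Finset.card_le_card h1) (Finset.card_union_le _ _)
  have h3 : (L \ L.filter (fun m : Fin n => (m : ℕ) < r)).card =
      L.card - (L.filter (fun m : Fin n => (m : ℕ) < r)).card :=
    Finset.card_sdiff_of_subset (Finset.filter_subset _ _)
  have h4 : (K ∩ L.filter (fun m : Fin n => (m : ℕ) < r)).card ≤
      (K.filter (fun m : Fin n => (m : ℕ) < r)).card := by
    apply Finset.card_le_card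
    intro x hx
    rw [Finset.mem_inter] at hx
    exact Finset.mem_filter.mpr ⟨hx.1, (Finset.mem_filter.mp hx.2).2⟩
  have h5 : (L.filter (fun m : Fin n => (m : ℕ) < r)).card ≤ L.card :=
    Finset.card_filter_le _ _
  have h6 : (K ∩ L).card ≤ K.card :=
    Finset.card_le_card Finset.inter_subset_left
  unfold cnt
  omega


-- ### distance to B(I)

lemma distB_ge (I K : Finset (Fin n)) (hI : I.card = k) (hK : K.card = k) (r : ℕ) :
    cnt I r ≤ cnt K r + distToSet k K {L : Finset (Fin n) | galeLE n k L I} := by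
  classical
  have hne : (distKL k K '' {L : Finset (Fin n) | galeLE n k L I}).Nonempty := by
    refine ⟨distKL k K I, I, ?_, rfl⟩
    exact ⟨hI, hI, fun t => le_refl _⟩
  obtain ⟨L, hLmem, hLval⟩ := Nat.sInf_mem hne
  have hL : L.card = k := hLmem.1
  have hcnt : ∀ r : ℕ, cnt I r ≤ cnt L r := (gale_iff hL hI).mp hLmem
  have hlow := inter_card_lower hK hL r
  have : distToSet k K {L : Finset (Fin n) | galeLE n k L I} = k - (K ∩ L).card := by
    rw [distToSet, ← hLval, distKL]
  rw [this]
  have := hcnt r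
  omega

lemma distB_le (I K : Finset (Fin n)) (hI : I.card = k) (hK : K.card = k) (m : ℕ)
    (h : ∀ r : ℕ, cnt I r ≤ cnt K r + m) :
    distToSet k K {L : Finset (Fin n) | galeLE n k L I} ≤ m := by
  obtain ⟨L, hL1, hL2, hL3⟩ := exists_le I hI m K hK h
  have hmem : L ∈ {L : Finset (Fin n) | galeLE n k L I} := (gale_iff hL1 hI).mpr hL2
  have hle : distKL k K L ≤ m := by rw [distKL]; omega
  exact le_trans (Nat.sInf_le ⟨L, hmem, rfl⟩) hle

-- ### reversal

def rv {n : ℕ} (X : Finset (Fin n)) : Finset (Fin n) :=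
  X.map ⟨Fin.rev, Fin.rev_injective⟩

lemma rv_rv (X : Finset (Fin n)) : rv (rv X) = X := by
  ext x
  simp only [rv, Finset.mem_map, Function.Embedding.coeFn_mk]
  constructor
  · rintro ⟨a, ⟨b, hb, rfl⟩, rfl⟩
    rwa [Fin.rev_rev]
  · intro hx
    exact ⟨x.rev, ⟨x, hx, rfl⟩, Fin.rev_rev x⟩

lemma rv_card (X : Finset (Fin n)) : (rv X).card = X.card := Finset.card_map _

lemma rv_inter (X Y : Finset (Fin n)) : rv (X ∩ Y) = rv X ∩ rv Y := Finset.map_inter _ _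

lemma cnt_rv (X : Finset (Fin n)) {r : ℕ} (hr : r ≤ n) :
    cnt (rv X) r = X.card - cnt X (n - r) := by
  classical
  unfold cnt rv
  rw [Finset.filter_map]
  rw [Finset.card_map]
  have hcong : X.filter ((fun m : Fin n => (m : ℕ) < r) ∘ Fin.rev) =
      X.filter (fun m : Fin n => ¬ ((m : ℕ) < n - r)) := by
    apply Finset.filter_congr
    intro x _
    simp only [Function.comp_apply, Fin.val_rev]
    have := x.isLt
    omega
  simp only [Function.Embedding.coeFn_mk]
  rw [hcong]
  have := Finset.card_filter_add_card_filter_not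
    (s := X) (p := fun m : Fin n => (m : ℕ) < n - r)
  omega

lemma gale_rv {L J : Finset (Fin n)} (hL : L.card = k) (hJ : J.card = k) :
    galeLE n k J L ↔ galeLE n k (rv L) (rv J) := by
  rw [gale_iff hJ hL, gale_iff (by rw [rv_card, hL]) (by rw [rv_card, hJ] : (rv J).card = k)]
  constructor
  · intro h r
    rcases le_or_gt r n with hr | hr
    · rw [cnt_rv J hr, cnt_rv L hr, hJ, hL]
      have h1 := h (n - r)
      have h2 : cnt J (n - r) ≤ k := by rw [← hJ]; exact cnt_le_card _ _
      have h3 : cnt L (n - r) ≤ k := by rw [← hL]; exact cnt_le_card _ _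
      omega
    · rw [cnt_of_ge (le_of_lt hr), cnt_of_ge (le_of_lt hr), rv_card, rv_card, hJ, hL]
  · intro h s
    rcases le_or_gt s n with hs | hs
    · have h1 := h (n - s)
      rw [cnt_rv J (by omega), cnt_rv L (by omega), hJ, hL] at h1
      have hns : n - (n - s) = s := by omega
      rw [hns] at h1
      have h2 : cnt J s ≤ k := by rw [← hJ]; exact cnt_le_card _ _
      have h3 : cnt L s ≤ k := by rw [← hL]; exact cnt_le_card _ _
      omega
    · rw [cnt_of_ge (le_of_lt hs), cnt_of_ge (le_of_lt hs), hJ, hL]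

lemma distA_eq (J K : Finset (Fin n)) (hJ : J.card = k) (hK : K.card = k) :
    distToSet k K {L : Finset (Fin n) | galeLE n k J L} =
    distToSet k (rv K) {L : Finset (Fin n) | galeLE n k L (rv J)} := by
  unfold distToSet
  congr 1
  ext v
  constructor
  · rintro ⟨L, hLmem, rfl⟩
    refine ⟨rv L, ?_, ?_⟩
    · exact (gale_rv hLmem.2.1 hJ).mp hLmem
    · rw [distKL, distKL, ← rv_inter, rv_card]
  · rintro ⟨L', hLmem, rfl⟩
    refine ⟨rv L', ?_, ?_⟩
    · have hL' : L'.card = k := hLmem.1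
      have hrr : galeLE n k (rv (rv L')) (rv J) := by rw [rv_rv]; exact hLmem
      exact (gale_rv (by rw [rv_card, hL']) hJ).mpr hrr
    · rw [distKL, distKL]
      have hiv : rv K ∩ L' = rv (K ∩ rv L') := by rw [rv_inter, rv_rv]
      rw [hiv, rv_card]

lemma distA_ge (J K : Finset (Fin n)) (hJ : J.card = k) (hK : K.card = k) {s : ℕ}
    (hs : s ≤ n) :
    cnt K s ≤ cnt J s + distToSet k K {L : Finset (Fin n) | galeLE n k J L} := by
  rw [distA_eq J K hJ hK]
  have h := distB_ge (rv J) (rv K) (by rw [rv_card, hJ]) (by rw [rv_card, hK]) (n - s)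
  rw [cnt_rv J (by omega), cnt_rv K (by omega), hJ, hK] at h
  have hns : n - (n - s) = s := by omega
  rw [hns] at h
  have h2 : cnt J s ≤ k := by rw [← hJ]; exact cnt_le_card _ _
  have h3 : cnt K s ≤ k := by rw [← hK]; exact cnt_le_card _ _
  omega

lemma distA_le (J K : Finset (Fin n)) (hJ : J.card = k) (hK : K.card = k) (m : ℕ)
    (h : ∀ s : ℕ, cnt K s ≤ cnt J s + m) :
    distToSet k K {L : Finset (Fin n) | galeLE n k J L} ≤ m := by
  rw [distA_eq J K hJ hK]
  apply distB_le (rv J) (rv K) (by rw [rv_card, hJ]) (by rw [rv_card, hK]) m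
  intro r
  rcases le_or_gt r n with hr | hr
  · rw [cnt_rv J hr, cnt_rv K hr, hJ, hK]
    have h1 := h (n - r)
    have h2 : cnt J (n - r) ≤ k := by rw [← hJ]; exact cnt_le_card _ _
    have h3 : cnt K (n - r) ≤ k := by rw [← hK]; exact cnt_le_card _ _
    omega
  · rw [cnt_of_ge (le_of_lt hr), cnt_of_ge (le_of_lt hr), rv_card, rv_card, hJ, hK]
    omega

end Stmt18

theorem stmt_18 (n k : ℕ) (hk : k ≤ n) (d : ℕ)
    (I J K : Finset (Fin n)) (hI : I.card = k) (hJ : J.card = k) (hK : K.card = k) :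
    -- K ∈ T(I,J,d) : dist(K, B(I)) + dist(K, A(J)) ≤ d
    (distToSet k K {L : Finset (Fin n) | galeLE n k L I} +
      distToSet k K {L : Finset (Fin n) | galeLE n k J L} ≤ d) ↔
    ∀ r s : ℕ, r ≤ n → s ≤ n →
      (((I.filter fun m : Fin n => (m : ℕ) < r).card : ℤ) -
        ((K.filter fun m : Fin n => (m : ℕ) < r).card : ℤ)) +
      (((K.filter fun m : Fin n => (m : ℕ) < s).card : ℤ) -
        ((J.filter fun m : Fin n => (m : ℕ) < s).card : ℤ)) ≤ (d : ℤ) := by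
  classical
  have ecnt : ∀ (X : Finset (Fin n)) (r : ℕ),
      (X.filter fun m : Fin n => (m : ℕ) < r).card = Stmt18.cnt X r := fun _ _ => rfl
  constructor
  · intro h r s hr hs
    have h1 := Stmt18.distB_ge I K hI hK r
    have h2 := Stmt18.distA_ge J K hJ hK hs
    simp only [Stmt18.cnt] at h1 h2
    omega
  · intro h
    set mB := Finset.sup (Finset.range (n + 1)) (fun r => Stmt18.cnt I r - Stmt18.cnt K r)
      with hmBdef
    set mA := Finset.sup (Finset.range (n + 1)) (fun s => Stmt18.cnt K s - Stmt18.cnt J s)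
      with hmAdef
    have hBle : distToSet k K {L : Finset (Fin n) | galeLE n k L I} ≤ mB := by
      apply Stmt18.distB_le I K hI hK
      intro r
      rcases le_or_gt r n with hr | hr
      · have hle : Stmt18.cnt I r - Stmt18.cnt K r ≤ mB :=
          Finset.le_sup (f := fun r => Stmt18.cnt I r - Stmt18.cnt K r)
            (Finset.mem_range.mpr (by omega : r < n + 1))
        omega
      · rw [Stmt18.cnt_of_ge (le_of_lt hr), Stmt18.cnt_of_ge (le_of_lt hr), hI, hK]
        omega
    have hAle : distToSet k K {L : Finset (Fin n) | galeLE n k J L} ≤ mA := by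
      apply Stmt18.distA_le J K hJ hK
      intro s
      rcases le_or_gt s n with hs | hs
      · have hle : Stmt18.cnt K s - Stmt18.cnt J s ≤ mA :=
          Finset.le_sup (f := fun s => Stmt18.cnt K s - Stmt18.cnt J s)
            (Finset.mem_range.mpr (by omega : s < n + 1))
        omega
      · rw [Stmt18.cnt_of_ge (le_of_lt hs), Stmt18.cnt_of_ge (le_of_lt hs), hJ, hK]
        omega
    obtain ⟨rr, hrrmem, hrr⟩ := Finset.exists_mem_eq_sup (Finset.range (n + 1))
      ⟨0, Finset.mem_range.mpr (by omega)⟩ (fun r => Stmt18.cnt I r - Stmt18.cnt K r)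
    obtain ⟨ss, hssmem, hss⟩ := Finset.exists_mem_eq_sup (Finset.range (n + 1))
      ⟨0, Finset.mem_range.mpr (by omega)⟩ (fun s => Stmt18.cnt K s - Stmt18.cnt J s)
    have hrrn : rr ≤ n := by have := Finset.mem_range.mp hrrmem; omega
    have hssn : ss ≤ n := by have := Finset.mem_range.mp hssmem; omega
    have h1 := h rr ss hrrn hssn
    have h2 := h rr 0 hrrn (by omega)
    have h3 := h 0 ss (by omega) hssn
    simp only [ecnt] at h1 h2 h3
    have hzI : Stmt18.cnt I 0 = 0 := Stmt18.cnt_zero I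
    have hzJ : Stmt18.cnt J 0 = 0 := Stmt18.cnt_zero J
    have hzK : Stmt18.cnt K 0 = 0 := Stmt18.cnt_zero K
    have hrr' : mB = Stmt18.cnt I rr - Stmt18.cnt K rr := by rw [hmBdef]; exact hrr
    have hss' : mA = Stmt18.cnt K ss - Stmt18.cnt J ss := by rw [hmAdef]; exact hss
    omega
end
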